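/- arXiv:1507.03789 — 8 statements merged into one kernel-verified Lean document; each statement's English description precedes it below -/
import Mathlib

section
/- Let $A \subset \mathbb{R}^n$ be a nonempty set and let $\gamma : [a,b] \to \mathbb{R}^n$ be a Lipschitz curve. Then the following are equivalent: (i) for every $y \in A$, the function $t \mapsto \|\gamma(t) - y\|$ is nondecreasing on $[a,b]$; (ii) for almost every $t \in [a,b]$, $\langle \gamma'(t), y - \gamma(t) \rangle \le 0$ for every $y \in A$. -/
open MeasureTheory Set Filter

/-- Derivative at an interior point of a monotone function is nonnegative. -/
lemma deriv_nonneg_of_monotoneOn' {f : ℝ → ℝ} {a b t d : ℝ}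
    (hm : MonotoneOn f (Icc a b)) (ht : t ∈ Ioo a b) (hd : HasDerivAt f d t) : 0 ≤ d := by
  have hs : Tendsto (slope f t) (nhdsWithin t (Ioi t)) (nhds d) :=
    (hasDerivAt_iff_tendsto_slope.1 hd).mono_left
      (nhdsWithin_mono _ (fun x hx => by
        simp only [mem_compl_iff, mem_singleton_iff]
        exact ne_of_gt hx))
  refine ge_of_tendsto hs ?_
  filter_upwards [Ioo_mem_nhdsGT_of_mem (⟨le_refl t, ht.2⟩ : t ∈ Ico t b)] with x hx
  have h1 : f t ≤ f x :=
    hm ⟨ht.1.le, ht.2.le⟩ ⟨ht.1.le.trans hx.1.le, hx.2.le⟩ hx.1.le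
  have h2 : 0 < x - t := sub_pos.2 hx.1
  rw [slope_def_field]
  exact div_nonneg (sub_nonneg.2 h1) h2.le

/-- A Lipschitz function with a.e. nonnegative derivative on an interval is monotone there. -/
lemma monotoneOn_of_ae_deriv_nonneg {f : ℝ → ℝ} {K : NNReal} (hf : LipschitzWith K f)
    {a b : ℝ} (h0 : ∀ᵐ u ∂(volume.restrict (Ioo a b)), 0 ≤ deriv f u) :
    MonotoneOn f (Icc a b) := by
  intro s hs t ht hst
  rcases eq_or_lt_of_le hst with rfl | hst
  · exact le_rfl
  set h : ℕ → ℝ := fun k => 1 / (k + 1) with hh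
  have hhpos : ∀ k, 0 < h k := fun k => by positivity
  have hh0 : Tendsto h atTop (nhds 0) := tendsto_one_div_add_atTop_nhds_zero_nat
  have hcont : Continuous f := hf.continuous
  have hint : ∀ x y : ℝ, IntervalIntegrable f volume x y :=
    fun x y => hcont.intervalIntegrable x y
  -- Step 1 : rewrite the integral of slopes
  have step1 : ∀ k, (∫ u in s..t, (f (u + h k) - f u) / h k)
      = ((∫ u in t..(t + h k), f u) - ∫ u in s..(s + h k), f u) / h k := by
    intro k
    have e1 : (∫ u in s..t, f (u + h k)) = ∫ u in (s + h k)..(t + h k), f u :=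
      intervalIntegral.integral_comp_add_right f (h k)
    have e2 : (∫ u in s..(s + h k), f u) + (∫ u in (s + h k)..(t + h k), f u)
        = ∫ u in s..(t + h k), f u :=
      intervalIntegral.integral_add_adjacent_intervals (hint _ _) (hint _ _)
    have e3 : (∫ u in s..t, f u) + (∫ u in t..(t + h k), f u)
        = ∫ u in s..(t + h k), f u :=
      intervalIntegral.integral_add_adjacent_intervals (hint _ _) (hint _ _)
    have e4 : (∫ u in s..t, (f (u + h k) - f u) / h k)
        = ((∫ u in s..t, f (u + h k)) - ∫ u in s..t, f u) / h k := by
      have i1 : IntervalIntegrable (fun u => f (u + h k)) volume s t :=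
        (hcont.comp (continuous_add_right (h k))).intervalIntegrable _ _
      rw [intervalIntegral.integral_div, intervalIntegral.integral_sub i1 (hint _ _)]
    rw [e4, e1]
    congr 1
    linarith
  -- Step 2 : convergence of the boundary terms
  have bdry : ∀ c : ℝ, Tendsto (fun k => (∫ u in c..(c + h k), f u) / h k) atTop (nhds (f c)) := by
    intro c
    have hG : HasDerivAt (fun x => ∫ u in c..x, f u) (f c) c :=
      intervalIntegral.integral_hasDerivAt_right (hint _ _)
        (hcont.stronglyMeasurableAtFilter _ _) hcont.continuousAt
    have hslope := hasDerivAt_iff_tendsto_slope.1 hG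
    have hseq : Tendsto (fun k => c + h k) atTop (nhdsWithin c {c}ᶜ) := by
      apply tendsto_nhdsWithin_of_tendsto_nhds_of_eventually_within
      · simpa using tendsto_const_nhds.add hh0
      · exact Eventually.of_forall fun k => by
          have := hhpos k
          simp only [mem_compl_iff, mem_singleton_iff]
          intro hc; nlinarith
    have key := hslope.comp hseq
    convert key using 1
    funext k
    simp [Function.comp_def, slope_def_field, intervalIntegral.integral_same]
  have lim1 : Tendsto (fun k => ∫ u in s..t, (f (u + h k) - f u) / h k) atTop
      (nhds (f t - f s)) := by
    exact ((bdry t).sub (bdry s)).congr fun k => by rw [step1 k, sub_div]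
  -- Step 3 : dominated convergence towards the integral of the derivative
  have hdiff : ∀ᵐ u ∂(volume.restrict (Ioo s t)), DifferentiableAt ℝ f u :=
    ae_restrict_of_ae hf.ae_differentiableAt
  have lim2 : Tendsto (fun k => ∫ u in Ioo s t, (f (u + h k) - f u) / h k) atTop
      (nhds (∫ u in Ioo s t, deriv f u)) := by
    apply tendsto_integral_of_dominated_convergence (fun _ => (K : ℝ))
    · intro k
      exact (((hcont.comp (continuous_add_right (h k))).sub hcont).div_const _).aestronglyMeasurable
    · exact integrable_const _
    · intro k
      refine Eventually.of_forall fun u => ?_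
      have : |f (u + h k) - f u| ≤ (K : ℝ) * h k := by
        have := hf.dist_le_mul (u + h k) u
        simpa [Real.dist_eq, abs_of_pos (hhpos k)] using this
      rw [Real.norm_eq_abs, abs_div, abs_of_pos (hhpos k), div_le_iff₀ (hhpos k)]
      exact this
    · filter_upwards [hdiff] with u hu
      have hslope := hasDerivAt_iff_tendsto_slope.1 hu.hasDerivAt
      have hseq : Tendsto (fun k => u + h k) atTop (nhdsWithin u {u}ᶜ) := by
        apply tendsto_nhdsWithin_of_tendsto_nhds_of_eventually_within
        · simpa using tendsto_const_nhds.add hh0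
        · exact Eventually.of_forall fun k => by
            have := hhpos k
            simp only [mem_compl_iff, mem_singleton_iff]
            intro hc; nlinarith
      have key := hslope.comp hseq
      convert key using 1
      funext k
      simp [Function.comp_def, slope_def_field]
  -- put things together
  have keyeq : f t - f s = ∫ u in Ioo s t, deriv f u := by
    apply tendsto_nhds_unique _ lim2
    have : ∀ k, (∫ u in Ioo s t, (f (u + h k) - f u) / h k)
        = ∫ u in s..t, (f (u + h k) - f u) / h k := by
      intro k
      rw [intervalIntegral.integral_of_le hst.le, integral_Ioc_eq_integral_Ioo]
    simpa only [this] using lim1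
  have hnn : 0 ≤ ∫ u in Ioo s t, deriv f u := by
    apply integral_nonneg_of_ae
    exact ae_restrict_of_ae_restrict_of_subset
      (Ioo_subset_Ioo hs.1 ht.2) h0
  rw [← keyeq] at hnn
  linarith

lemma sq_norm_hasDerivAt {n : ℕ} (γ : ℝ → EuclideanSpace ℝ (Fin n))
    (y : EuclideanSpace ℝ (Fin n)) {t : ℝ} {v : EuclideanSpace ℝ (Fin n)}
    (hv : HasDerivAt γ v t) :
    HasDerivAt (fun u => ‖γ u - y‖ ^ 2) (2 * inner ℝ v (γ t - y)) t := by
  have h1 : HasDerivAt (fun u => γ u - y) v t := hv.sub_const y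
  have h2 := HasDerivAt.inner ℝ h1 h1
  have heq : (fun u => (inner ℝ (γ u - y) (γ u - y) : ℝ)) = fun u => ‖γ u - y‖ ^ 2 := by
    funext u
    exact real_inner_self_eq_norm_sq _
  rw [heq] at h2
  refine h2.congr_deriv ?_
  rw [real_inner_comm (γ t - y) v]
  ring

/-- For a Lipschitz curve `γ` and a nonempty set `A ⊆ ℝⁿ`, the distance
`t ↦ ‖γ t - y‖` is nondecreasing on `[a, b]` for every `y ∈ A` iff for almost every
`t ∈ [a, b]` one has `⟪γ'(t), y - γ(t)⟫ ≤ 0` for every `y ∈ A`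
(the distancing-from-`A` property). -/
theorem stmt_1 {n : ℕ} (A : Set (EuclideanSpace ℝ (Fin n))) (hA : A.Nonempty)
    (a b : ℝ) (hab : a ≤ b)
    (γ : ℝ → EuclideanSpace ℝ (Fin n)) (L : NNReal) (hγ : LipschitzWith L γ) :
    (∀ y ∈ A, MonotoneOn (fun t => ‖γ t - y‖) (Icc a b)) ↔
      (∀ᵐ t ∂(volume.restrict (Icc a b)),
        ∀ y ∈ A, (inner ℝ (deriv γ t) (y - γ t) : ℝ) ≤ 0) := by
  constructor
  · intro H
    have hIoo : ∀ᵐ t ∂(volume.restrict (Icc a b)), t ∈ Ioo a b := by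
      have hnull : volume (Icc a b \ Ioo a b) = 0 := by
        have : Icc a b \ Ioo a b ⊆ {a} ∪ {b} := by
          intro x hx
          rcases hx with ⟨⟨h1, h2⟩, h3⟩
          simp only [mem_Ioo, not_and, not_lt] at h3
          rcases eq_or_lt_of_le h1 with rfl | h1'
          · exact Or.inl rfl
          · exact Or.inr (le_antisymm h2 (h3 h1'))
        exact measure_mono_null this
            (le_antisymm (le_trans (measure_union_le _ _) (by simp)) bot_le)
      have h1 : ∀ᵐ t ∂(volume.restrict (Icc a b)), t ∈ Icc a b :=
        ae_restrict_mem measurableSet_Icc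
      have h2 : ∀ᵐ t ∂(volume.restrict (Icc a b)), t ∉ Icc a b \ Ioo a b :=
        ae_restrict_of_ae (measure_eq_zero_iff_ae_notMem.1 hnull)
      filter_upwards [h1, h2] with t ht1 ht2
      by_contra hc
      exact ht2 ⟨ht1, hc⟩
    have hdiff : ∀ᵐ t ∂(volume.restrict (Icc a b)), DifferentiableAt ℝ γ t :=
      ae_restrict_of_ae hγ.ae_differentiableAt
    filter_upwards [hIoo, hdiff] with t ht hd
    intro y hy
    have hmono : MonotoneOn (fun u => ‖γ u - y‖ ^ 2) (Icc a b) := by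
      intro u hu v hv huv
      have := H y hy hu hv huv
      simpa using pow_le_pow_left₀ (norm_nonneg _) this 2
    have hder := sq_norm_hasDerivAt γ y hd.hasDerivAt
    have hnn : 0 ≤ 2 * (inner ℝ (deriv γ t) (γ t - y) : ℝ) :=
      deriv_nonneg_of_monotoneOn' hmono ht hder
    have : (inner ℝ (deriv γ t) (y - γ t) : ℝ) = -(inner ℝ (deriv γ t) (γ t - y) : ℝ) := by
      rw [← inner_neg_right]
      congr 1
      abel
    rw [this]
    linarith
  · intro H y hy
    have hlip : LipschitzWith L (fun u => ‖γ u - y‖) := by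
      apply LipschitzWith.of_dist_le_mul
      intro u v
      rw [Real.dist_eq]
      calc |‖γ u - y‖ - ‖γ v - y‖| ≤ ‖(γ u - y) - (γ v - y)‖ := abs_norm_sub_norm_le _ _
        _ = ‖γ u - γ v‖ := by congr 1; abel
        _ = dist (γ u) (γ v) := (dist_eq_norm _ _).symm
        _ ≤ L * dist u v := hγ.dist_le_mul u v
    apply monotoneOn_of_ae_deriv_nonneg hlip
    have hH : ∀ᵐ u ∂(volume.restrict (Ioo a b)),
        ∀ z ∈ A, (inner ℝ (deriv γ u) (z - γ u) : ℝ) ≤ 0 :=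
      ae_restrict_of_ae_restrict_of_subset Ioo_subset_Icc_self H
    have hdiff : ∀ᵐ u ∂(volume.restrict (Ioo a b)), DifferentiableAt ℝ γ u :=
      ae_restrict_of_ae hγ.ae_differentiableAt
    filter_upwards [hH, hdiff] with u hu hd
    by_cases hc : γ u = y
    · have hmin : IsLocalMin (fun v => ‖γ v - y‖) u := by
        apply Filter.Eventually.of_forall
        intro v
        simp [hc]
      rw [hmin.deriv_eq_zero]
    · have hpos : 0 < ‖γ u - y‖ := by
        rw [norm_pos_iff]
        exact sub_ne_zero.2 hc
      have hg := sq_norm_hasDerivAt γ y hd.hasDerivAt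
      have hsq : (‖γ u - y‖ ^ 2 : ℝ) ≠ 0 := by positivity
      have hsqrt := (Real.hasDerivAt_sqrt hsq).comp u hg
      have heq : (Real.sqrt ∘ fun v => ‖γ v - y‖ ^ 2) = fun v => ‖γ v - y‖ := by
        funext v
        exact Real.sqrt_sq (norm_nonneg _)
      rw [heq] at hsqrt
      rw [hsqrt.deriv]
      have h1 : 0 ≤ (inner ℝ (deriv γ u) (γ u - y) : ℝ) := by
        have := hu y hy
        have heq2 : (inner ℝ (deriv γ u) (y - γ u) : ℝ) = -(inner ℝ (deriv γ u) (γ u - y) : ℝ) := by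
          rw [← inner_neg_right]; congr 1; abel
        rw [heq2] at this
        linarith
      have h2 : 0 < Real.sqrt (‖γ u - y‖ ^ 2) := Real.sqrt_pos.2 (by positivity)
      positivity
end

section
/- Let $K \subset \mathbb{R}^n$ be a nonempty compact convex set and let $\gamma : [a,b] \to \mathbb{R}^n$ be a continuous curve such that (1) for all $a \le t_1 \le t_2 \le t_3 \le b$, $\|\gamma(t_2) - \gamma(t_1)\| \le \|\gamma(t_3) - \gamma(t_1)\|$, and (2) for every $y \in K$ the function $t \mapsto \|\gamma(t) - y\|$ is nondecreasing on $[a,b]$. Then for every $c \in [a,b]$ and every $y$ in the convex hull of $K \cup \gamma([a,c])$, the function $t \mapsto \|\gamma(t) - y\|$ is nondecreasing on $[c,b]$. -/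
open Set

/-- The set of points at least as far from `p` as from `q` is a half-space, hence convex. -/
lemma convex_bisector_halfspace {E : Type*} [NormedAddCommGroup E]
    [InnerProductSpace ℝ E] (p q : E) :
    Convex ℝ {y : E | ‖p - y‖ ≤ ‖q - y‖} := by
  have hset : {y : E | ‖p - y‖ ≤ ‖q - y‖}
      = {y : E | inner ℝ (q - p) y ≤ (‖q‖ ^ 2 - ‖p‖ ^ 2) / 2} := by
    ext y
    simp only [mem_setOf_eq]
    rw [← Real.sqrt_sq (norm_nonneg (p - y)), ← Real.sqrt_sq (norm_nonneg (q - y)),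
      Real.sqrt_le_sqrt_iff (by positivity)]
    rw [← real_inner_self_eq_norm_sq, ← real_inner_self_eq_norm_sq]
    simp only [inner_sub_left, inner_sub_right, real_inner_comm y p, real_inner_comm y q]
    rw [real_inner_self_eq_norm_sq p, real_inner_self_eq_norm_sq q]
    constructor <;> intro h <;> nlinarith [h]
  rw [hset]
  exact convex_halfSpace_le
    (by constructor <;> intros <;> simp [inner_add_right, inner_smul_right]) _

/-- If `γ : [a,b] → ℝⁿ` is a continuous self-distancing curve from the
nonempty compact convex set `K` (i.e. it is self-distancing and the distance from every
point of `K` is nondecreasing along `γ`), then for every `c ∈ [a,b]`, the distance from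
every point of the convex hull of `K ∪ γ([a,c])` is nondecreasing along `γ` on `[c,b]`. -/
theorem stmt_2 {n : ℕ} (K : Set (EuclideanSpace ℝ (Fin n)))
    (hne : K.Nonempty) (hcp : IsCompact K) (hcv : Convex ℝ K)
    (a b : ℝ) (γ : ℝ → EuclideanSpace ℝ (Fin n))
    (hcont : ContinuousOn γ (Icc a b))
    (hsd : ∀ t₁ ∈ Icc a b, ∀ t₂ ∈ Icc a b, ∀ t₃ ∈ Icc a b,
      t₁ ≤ t₂ → t₂ ≤ t₃ → ‖γ t₂ - γ t₁‖ ≤ ‖γ t₃ - γ t₁‖)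
    (hK : ∀ y ∈ K, MonotoneOn (fun t => ‖γ t - y‖) (Icc a b)) :
    ∀ c ∈ Icc a b, ∀ y ∈ convexHull ℝ (K ∪ γ '' Icc a c),
      MonotoneOn (fun t => ‖γ t - y‖) (Icc c b) := by
  intro c hc y hy t₁ ht₁ t₂ ht₂ h12
  have ht₁ab : t₁ ∈ Icc a b := ⟨hc.1.trans ht₁.1, ht₁.2⟩
  have ht₂ab : t₂ ∈ Icc a b := ⟨hc.1.trans ht₂.1, ht₂.2⟩
  -- the half-space of points whose distance to `γ t₁` is at most that to `γ t₂`
  have hsub : convexHull ℝ (K ∪ γ '' Icc a c)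
      ⊆ {z : EuclideanSpace ℝ (Fin n) | ‖γ t₁ - z‖ ≤ ‖γ t₂ - z‖} := by
    apply convexHull_min _ (convex_bisector_halfspace _ _)
    rintro z (hzK | ⟨s, hs, rfl⟩)
    · have := hK z hzK ht₁ab ht₂ab h12
      simpa using this
    · have hsab : s ∈ Icc a b := ⟨hs.1, hs.2.trans hc.2⟩
      have hst₁ : s ≤ t₁ := hs.2.trans ht₁.1
      have := hsd s hsab t₁ ht₁ab t₂ ht₂ab hst₁ h12
      simpa [mem_setOf_eq] using this
  have := hsub hy
  simpa [dist_eq_norm, norm_sub_rev (γ t₁) y, norm_sub_rev (γ t₂) y] using this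
end

section
/- Let $K \subset \mathbb{R}^2$ be a nonempty compact convex set, let $h : \mathbb{R} \to \mathbb{R}$ be defined by $h(\vartheta) = \sup_{y \in K} \langle (\cos\vartheta, \sin\vartheta), y \rangle$, and let $M = \sup_{y \in K} \|y\|$. Then the function $\vartheta \mapsto h(\vartheta) + \tfrac{M}{2}\vartheta^2$ is convex on $\mathbb{R}$; in particular the support function $h$ is semi-convex. -/
noncomputable def vec2 (a b : ℝ) : EuclideanSpace ℝ (Fin 2) :=
  (WithLp.equiv 2 (Fin 2 → ℝ)).symm ![a, b]

lemma inner_vec2 (a b : ℝ) (y : EuclideanSpace ℝ (Fin 2)) :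
    (inner ℝ (vec2 a b) y : ℝ) = a * y 0 + b * y 1 := by
  simp [vec2, PiLp.inner_apply, Fin.sum_univ_two, RCLike.inner_apply]; ring

lemma norm_vec2_cos_sin (θ : ℝ) : ‖vec2 (Real.cos θ) (Real.sin θ)‖ = 1 := by
  rw [show vec2 (Real.cos θ) (Real.sin θ) = (WithLp.equiv 2 (Fin 2 → ℝ)).symm ![Real.cos θ, Real.sin θ] from rfl]
  rw [EuclideanSpace.norm_eq]
  simp only [WithLp.equiv_symm_apply, WithLp.ofLp_toLp, Fin.sum_univ_two, Matrix.cons_val_zero,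
    Matrix.cons_val_one, Matrix.head_cons, Real.norm_eq_abs, sq_abs]
  rw [Real.cos_sq_add_sin_sq, Real.sqrt_one]

lemma aux_convex (a b M : ℝ) (hub : ∀ θ : ℝ, a * Real.cos θ + b * Real.sin θ ≤ M) :
    ConvexOn ℝ Set.univ (fun θ : ℝ => a * Real.cos θ + b * Real.sin θ + M / 2 * θ ^ 2) := by
  set f : ℝ → ℝ := fun θ => a * Real.cos θ + b * Real.sin θ + M / 2 * θ ^ 2 with hf
  set f' : ℝ → ℝ := fun θ => -(a * Real.sin θ) + b * Real.cos θ + M * θ with hf'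
  have hd1 : ∀ θ : ℝ, HasDerivAt f (f' θ) θ := by
    intro θ
    have h1 := (((Real.hasDerivAt_cos θ).const_mul a).add
      ((Real.hasDerivAt_sin θ).const_mul b)).add ((hasDerivAt_pow 2 θ).const_mul (M / 2))
    refine h1.congr_deriv ?_
    simp [hf']; ring
  have hd2 : ∀ θ : ℝ, HasDerivAt f' (-(a * Real.cos θ) - b * Real.sin θ + M) θ := by
    intro θ
    have h2 := ((((Real.hasDerivAt_sin θ).const_mul a).neg).add
      ((Real.hasDerivAt_cos θ).const_mul b)).add ((hasDerivAt_id θ).const_mul M)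
    refine h2.congr_deriv ?_
    ring
  have hderiv : deriv f = f' := funext fun θ => (hd1 θ).deriv
  apply convexOn_of_deriv2_nonneg convex_univ
  · exact Continuous.continuousOn (by fun_prop)
  · intro x _; exact (hd1 x).differentiableAt.differentiableWithinAt
  · intro x _; rw [hderiv]; exact (hd2 x).differentiableAt.differentiableWithinAt
  · intro x _
    have : deriv^[2] f x = -(a * Real.cos x) - b * Real.sin x + M := by
      show deriv (deriv f) x = _
      rw [hderiv]; exact (hd2 x).deriv
    rw [this]
    linarith [hub x]

/-- The support function `h(ϑ) = sup_{y ∈ K} ⟪(cos ϑ, sin ϑ), y⟫` of a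
nonempty compact convex set `K ⊆ ℝ²` is semi-convex: with `M = sup_{y ∈ K} ‖y‖`, the
function `ϑ ↦ h(ϑ) + (M/2) ϑ²` is convex on `ℝ`. -/
theorem stmt_3 (K : Set (EuclideanSpace ℝ (Fin 2)))
    (hne : K.Nonempty) (hcp : IsCompact K) (hcv : Convex ℝ K)
    (h : ℝ → ℝ)
    (hsupp : ∀ θ : ℝ,
      IsLUB ((fun y => (inner ℝ (vec2 (Real.cos θ) (Real.sin θ)) y : ℝ)) '' K) (h θ))
    (M : ℝ) (hM : IsLUB ((fun y => ‖y‖) '' K) M) :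
    ConvexOn ℝ Set.univ (fun θ : ℝ => h θ + M / 2 * θ ^ 2) := by
  -- key: for each y ∈ K, φ_y is convex
  have key : ∀ y ∈ K, ConvexOn ℝ Set.univ
      (fun θ : ℝ => y 0 * Real.cos θ + y 1 * Real.sin θ + M / 2 * θ ^ 2) := by
    intro y hy
    apply aux_convex
    intro θ
    have h1 : (inner ℝ (vec2 (Real.cos θ) (Real.sin θ)) y : ℝ) ≤
        ‖vec2 (Real.cos θ) (Real.sin θ)‖ * ‖y‖ := real_inner_le_norm _ _
    rw [inner_vec2, norm_vec2_cos_sin, one_mul] at h1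
    have h2 : ‖y‖ ≤ M := hM.1 ⟨y, hy, rfl⟩
    calc y 0 * Real.cos θ + y 1 * Real.sin θ
        = Real.cos θ * y 0 + Real.sin θ * y 1 := by ring
      _ ≤ ‖y‖ := h1
      _ ≤ M := h2
  refine ⟨convex_univ, ?_⟩
  intro x _ z _ p q hp hq hpq
  simp only [smul_eq_mul]
  have hlub := hsupp (p * x + q * z)
  have hub : h (p * x + q * z) ≤
      p * (h x + M / 2 * x ^ 2) + q * (h z + M / 2 * z ^ 2) - M / 2 * (p * x + q * z) ^ 2 := by
    apply hlub.2
    rintro _ ⟨y, hy, rfl⟩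
    have hc := (key y hy).2 (Set.mem_univ x) (Set.mem_univ z) hp hq hpq
    simp only [smul_eq_mul] at hc
    have hx' : (inner ℝ (vec2 (Real.cos x) (Real.sin x)) y : ℝ) ≤ h x :=
      (hsupp x).1 ⟨y, hy, rfl⟩
    have hz' : (inner ℝ (vec2 (Real.cos z) (Real.sin z)) y : ℝ) ≤ h z :=
      (hsupp z).1 ⟨y, hy, rfl⟩
    show (inner ℝ (vec2 (Real.cos (p * x + q * z)) (Real.sin (p * x + q * z))) y : ℝ) ≤ _
    rw [inner_vec2] at hx' hz' ⊢
    have hx'' : y 0 * Real.cos x + y 1 * Real.sin x ≤ h x := by linarith [hx']; 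
    have hz'' : y 0 * Real.cos z + y 1 * Real.sin z ≤ h z := by linarith [hz']
    nlinarith [hc, mul_le_mul_of_nonneg_left hx'' hp, mul_le_mul_of_nonneg_left hz'' hq]
  linarith
end

section
/- Let $K \subset \mathbb{R}^2$ be a compact convex body whose support function $h(\vartheta) = \sup_{y \in K} \langle (\cos\vartheta, \sin\vartheta), y \rangle$ is twice continuously differentiable with $h(\vartheta) + h''(\vartheta) > 0$ for all $\vartheta$. Fix $\vartheta_0 \in \mathbb{R}$ and let $i(\vartheta) = h(\vartheta) n_\vartheta - \big(\int_{\vartheta_0}^{\vartheta} h(\tau)\,d\tau - h'(\vartheta_0)\big) t_\vartheta$ be the left involute of $\partial K$ starting at $i(\vartheta_0)$. Then for every $\vartheta \ge \vartheta_0$, $i(\vartheta + 2\pi) = i(\vartheta) - L\, t_\vartheta$, where $L = \int_{0}^{2\pi} h(\tau)\, d\tau$ is the perimeter of $K$; that is, the involute after a full turn is parallel to itself at distance $L$. -/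
open Real MeasureTheory

/-- The outer normal direction `n_ϑ = (cos ϑ, sin ϑ)`. -/
noncomputable def nvec (θ : ℝ) : EuclideanSpace ℝ (Fin 2) := vec2 (Real.cos θ) (Real.sin θ)

/-- The tangent direction `t_ϑ = (-sin ϑ, cos ϑ)`. -/
noncomputable def tvec (θ : ℝ) : EuclideanSpace ℝ (Fin 2) := vec2 (-Real.sin θ) (Real.cos θ)

/-- After a full turn the left involute is parallel to itself at distance
`L = ∫_0^{2π} h`, the perimeter of `K`: for all `ϑ ≥ ϑ₀`,
`i(ϑ + 2π) = i(ϑ) - L t_ϑ`. -/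
theorem stmt_7 (K : Set (EuclideanSpace ℝ (Fin 2)))
    (hne : K.Nonempty) (hcp : IsCompact K) (hcv : Convex ℝ K)
    (h : ℝ → ℝ)
    (hsupp : ∀ θ : ℝ, IsLUB ((fun y => (inner ℝ (nvec θ) y : ℝ)) '' K) (h θ))
    (hsm : ContDiff ℝ 2 h) (hpos : ∀ θ, 0 < h θ + deriv (deriv h) θ)
    (θ₀ : ℝ) (i : ℝ → EuclideanSpace ℝ (Fin 2))
    (hi : ∀ θ, i θ = h θ • nvec θ - ((∫ τ in θ₀..θ, h τ) - deriv h θ₀) • tvec θ) :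
    ∀ θ, θ₀ ≤ θ →
      i (θ + 2 * Real.pi) = i θ - (∫ τ in (0:ℝ)..(2 * Real.pi), h τ) • tvec θ := by
  have hnper : ∀ θ : ℝ, nvec (θ + 2 * Real.pi) = nvec θ := by
    intro θ
    simp [nvec, Real.cos_add_two_pi, Real.sin_add_two_pi]
  have htper : ∀ θ : ℝ, tvec (θ + 2 * Real.pi) = tvec θ := by
    intro θ
    simp [tvec, Real.cos_add_two_pi, Real.sin_add_two_pi]
  have hper : Function.Periodic h (2 * Real.pi) := by
    intro θ
    have h1 := hsupp (θ + 2 * Real.pi)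
    rw [hnper θ] at h1
    exact h1.unique (hsupp θ)
  have hcont : Continuous h := hsm.continuous
  have hint : ∀ a b : ℝ, IntervalIntegrable h volume a b :=
    fun a b => hcont.intervalIntegrable a b
  intro θ _
  have hsplit : (∫ τ in θ₀..θ + 2 * Real.pi, h τ)
      = (∫ τ in θ₀..θ, h τ) + ∫ τ in (0:ℝ)..(2 * Real.pi), h τ := by
    rw [← intervalIntegral.integral_add_adjacent_intervals (hint θ₀ θ)
      (hint θ (θ + 2 * Real.pi))]
    congr 1
    have := hper.intervalIntegral_add_eq θ 0
    simpa using this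
  rw [hi, hi, hnper, htper, hper θ, hsplit]
  rw [sub_sub, ← add_smul]
  congr 2
  ring
end

section
/- Let $K \subset \mathbb{R}^2$ be a compact convex body whose support function $h(\vartheta) = \sup_{y \in K} \langle (\cos\vartheta, \sin\vartheta), y \rangle$ is twice continuously differentiable with $h(\vartheta) + h''(\vartheta) > 0$ for all $\vartheta$. For $\vartheta_0 \in \mathbb{R}$ and $\vartheta > \vartheta_0$ set $i_{\vartheta_0}(\vartheta) = h(\vartheta) n_\vartheta - \big(\int_{\vartheta_0}^{\vartheta} h(\tau)\,d\tau - h'(\vartheta_0)\big) t_\vartheta$ (the left involute of $\partial K$ starting at the boundary point with outer normal $n_{\vartheta_0}$). Then for every $z \in \mathbb{R}^2 \setminus K$ there exists a unique pair $(\vartheta_0, \vartheta)$ with $\vartheta_0 \in [0, 2\pi)$ and $\vartheta > \vartheta_0$ such that $z = i_{\vartheta_0}(\vartheta)$; that is, the family of left involutes parameterized by starting point on $\partial K$ and arc length covers $\mathbb{R}^2 \setminus K$ bijectively. -/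
open Real MeasureTheory Set intervalIntegral

lemma inner_nvec (θ : ℝ) (y : EuclideanSpace ℝ (Fin 2)) :
    (inner ℝ (nvec θ) y : ℝ) = Real.cos θ * y 0 + Real.sin θ * y 1 := by
  simp [nvec, vec2, PiLp.inner_apply, Fin.sum_univ_two, RCLike.inner_apply]
  ring

lemma decomp (c₁ c : ℝ) (θ : ℝ) (z : EuclideanSpace ℝ (Fin 2)) :
    c₁ • nvec θ - c • tvec θ = z ↔
      (Real.cos θ * z 0 + Real.sin θ * z 1 = c₁ ∧
       -Real.sin θ * z 0 + Real.cos θ * z 1 = -c) := by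
  have hsc := sin_sq_add_cos_sq θ
  constructor
  · intro hz
    have h0 : z 0 = c₁ * Real.cos θ - c * (-Real.sin θ) := by rw [← hz]; rfl
    have h1 : z 1 = c₁ * Real.sin θ - c * Real.cos θ := by rw [← hz]; rfl
    constructor
    · rw [h0, h1]; linear_combination c₁ * hsc
    · rw [h0, h1]; linear_combination (-c) * hsc
  · rintro ⟨e1, e2⟩
    ext i
    fin_cases i
    · show c₁ * Real.cos θ - c * (-Real.sin θ) = z 0
      linear_combination (-(Real.cos θ)) * e1 + Real.sin θ * e2 + z 0 * hsc
    · show c₁ * Real.sin θ - c * Real.cos θ = z 1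
      linear_combination (-(Real.sin θ)) * e1 - Real.cos θ * e2 + z 1 * hsc

lemma sep {K : Set (EuclideanSpace ℝ (Fin 2))} (hne : K.Nonempty)
    (hcp : IsCompact K) (hcv : Convex ℝ K) {h : ℝ → ℝ}
    (hsupp : ∀ θ : ℝ, IsLUB ((fun y => (inner ℝ (nvec θ) y : ℝ)) '' K) (h θ))
    {z : EuclideanSpace ℝ (Fin 2)} (hz : z ∉ K) :
    ∃ σ : ℝ, 0 < Real.cos σ * z 0 + Real.sin σ * z 1 - h σ := by
  obtain ⟨φ, u, hK, huz⟩ := geometric_hahn_banach_closed_point hcv hcp.isClosed hz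
  set v : EuclideanSpace ℝ (Fin 2) := (InnerProductSpace.toDual ℝ _).symm φ with hv
  have hvy : ∀ y, (inner ℝ v y : ℝ) = φ y := fun y => InnerProductSpace.toDual_symm_apply
  have hinner : ∀ y : EuclideanSpace ℝ (Fin 2), v 0 * y 0 + v 1 * y 1 = φ y := by
    intro y
    rw [← hvy y]
    simp [PiLp.inner_apply, Fin.sum_univ_two, RCLike.inner_apply]
    ring
  obtain ⟨y₀, hy₀⟩ := hne
  have hvne : ¬ (v 0 = 0 ∧ v 1 = 0) := by
    rintro ⟨h0, h1⟩
    have hz0 : φ z = 0 := by rw [← hinner z, h0, h1]; ring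
    have hy0 : φ y₀ = 0 := by rw [← hinner y₀, h0, h1]; ring
    have := hK y₀ hy₀
    rw [hy0] at this; rw [hz0] at huz; linarith
  set w : ℂ := ⟨v 0, v 1⟩ with hw
  have hwne : w ≠ 0 := by
    intro hw0
    apply hvne
    constructor
    · have := congrArg Complex.re hw0; simpa using this
    · have := congrArg Complex.im hw0; simpa using this
  set r : ℝ := ‖w‖ with hr
  have hrpos : 0 < r := by
    rw [hr]; exact (norm_pos_iff.mpr hwne)
  have hcos : Real.cos w.arg = v 0 / r := by
    rw [hr]; exact Complex.cos_arg hwne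
  have hsin : Real.sin w.arg = v 1 / r := by
    rw [hr]; exact Complex.sin_arg w
  refine ⟨w.arg, ?_⟩
  have hub : h w.arg ≤ u / r := by
    apply (hsupp w.arg).2
    rintro x ⟨y, hy, rfl⟩
    show (inner ℝ (nvec w.arg) y : ℝ) ≤ u / r
    rw [inner_nvec, hcos, hsin]
    rw [div_mul_eq_mul_div, div_mul_eq_mul_div, ← add_div, hinner y]
    exact (div_le_div_iff_of_pos_right hrpos).mpr (le_of_lt (hK y hy))
  have hzval : Real.cos w.arg * z 0 + Real.sin w.arg * z 1 = φ z / r := by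
    rw [hcos, hsin, div_mul_eq_mul_div, div_mul_eq_mul_div, ← add_div, hinner z]
  rw [hzval]
  have : u / r < φ z / r := (div_lt_div_iff_of_pos_right hrpos).mpr huz
  linarith


lemma aux_leftpos {F : ℝ → ℝ} {θ f' : ℝ} (hd : HasDerivAt F f' θ) (h0 : F θ = 0)
    (hneg : f' < 0) : ∃ ε > 0, ∀ x ∈ Set.Ioo (θ - ε) θ, 0 < F x := by
  have hs : Filter.Tendsto (slope F θ) (nhdsWithin θ (Set.Iio θ)) (nhds f') :=
    (hasDerivAt_iff_tendsto_slope.mp hd).mono_left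
      (nhdsWithin_mono θ (by intro x hx; exact ne_of_lt hx))
  have hev : ∀ᶠ x in nhdsWithin θ (Set.Iio θ), slope F θ x < 0 :=
    hs.eventually_lt_const hneg
  rw [eventually_nhdsWithin_iff] at hev
  rcases Metric.eventually_nhds_iff.mp hev with ⟨ε, hε, hball⟩
  refine ⟨ε, hε, fun x hx => ?_⟩
  have hxθ : x < θ := hx.2
  have hdist : dist x θ < ε := by
    rw [Real.dist_eq, abs_of_neg (by linarith)]; linarith [hx.1]
  have := hball hdist hxθ
  rw [slope_def_field] at this
  have hden : x - θ < 0 := by linarith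
  -- (F x - F θ)/(x - θ) < 0 with x - θ < 0 ⇒ F x - F θ > 0
  rw [div_neg_iff] at this
  rcases this with ⟨h1, h2⟩ | ⟨h1, h2⟩
  · linarith
  · rw [h0] at h1; linarith

lemma aux_slope_le {F : ℝ → ℝ} {θ f' σ : ℝ} (hd : HasDerivAt F f' θ) (h0 : F θ = 0)
    (hσ : σ < θ) (hpos : ∀ x ∈ Set.Ioo σ θ, 0 < F x) : f' ≤ 0 := by
  have hs : Filter.Tendsto (slope F θ) (nhdsWithin θ (Set.Iio θ)) (nhds f') :=
    (hasDerivAt_iff_tendsto_slope.mp hd).mono_left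
      (nhdsWithin_mono θ (by intro x hx; exact ne_of_lt hx))
  refine le_of_tendsto hs ?_
  filter_upwards [Ioo_mem_nhdsLT_of_mem (show θ ∈ Set.Ioc σ θ from ⟨hσ, le_refl _⟩)] with x hx
  rw [slope_def_field, h0]
  have h1 : 0 < F x := hpos x hx
  have h2 : x - θ < 0 := by linarith [hx.2]
  exact le_of_lt (div_neg_of_pos_of_neg (by linarith) h2)


lemma dc_deriv_neg {F F' F'' : ℝ → ℝ} (hF' : ∀ x, HasDerivAt F (F' x) x)
    (hF'' : ∀ x, HasDerivAt F' (F'' x) x) (hcont : Continuous F'')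
    {σ b : ℝ} (hσb : σ < b) (hpos : ∀ x ∈ Set.Ioo σ b, 0 < F x) (hb : F b = 0)
    (hneg : F'' b < 0) : F' b < 0 := by
  rcases lt_or_eq_of_le (aux_slope_le (hF' b) hb hσb hpos) with hlt | heq
  · exact hlt
  · exfalso
    -- F' b = 0, F'' < 0 near b
    have hopen : IsOpen {x | F'' x < 0} := isOpen_lt hcont continuous_const
    rcases Metric.isOpen_iff.mp hopen b hneg with ⟨ε, hε, hball⟩
    set c : ℝ := max σ (b - ε/2) with hc
    have hcb : c < b := by
      apply max_lt hσb; linarith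
    have hsub : Set.Ioo c b ⊆ {x | F'' x < 0} := by
      intro x hx
      apply hball
      rw [Metric.mem_ball, Real.dist_eq, abs_of_neg (by linarith [hx.2])]
      have := hx.1
      have : b - ε/2 < x := lt_of_le_of_lt (le_max_right _ _) hx.1
      linarith
    -- F' strictly decreasing on [c, b]
    have hanti : StrictAntiOn F' (Set.Icc c b) := by
      apply strictAntiOn_of_deriv_neg (convex_Icc c b)
      · exact Continuous.continuousOn (continuous_iff_continuousAt.mpr (fun x => (hF'' x).continuousAt))
      · intro x hx
        rw [interior_Icc] at hx
        rw [(hF'' x).deriv]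
        exact hsub hx
    -- F' > 0 on Ioo c b
    have hFppos : ∀ x ∈ Set.Ioo c b, 0 < F' x := by
      intro x hx
      have := hanti ⟨le_of_lt hx.1, le_of_lt hx.2⟩ ⟨le_of_lt hcb, le_refl b⟩ hx.2
      rw [← heq]; exact this
    -- F strictly increasing on [ (c+b)/2, b ]
    set c' : ℝ := (c+b)/2 with hc'
    have hcc' : c < c' := by rw [hc']; linarith
    have hc'b : c' < b := by rw [hc']; linarith
    have hmono : StrictMonoOn F (Set.Icc c' b) := by
      apply strictMonoOn_of_deriv_pos (convex_Icc c' b)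
      · exact Continuous.continuousOn (continuous_iff_continuousAt.mpr (fun x => (hF' x).continuousAt))
      · intro x hx
        rw [interior_Icc] at hx
        rw [(hF' x).deriv]
        exact hFppos x ⟨lt_trans hcc' hx.1, hx.2⟩
    have h1 : F c' < F b := hmono ⟨le_refl _, le_of_lt hc'b⟩ ⟨le_of_lt hc'b, le_refl _⟩ hc'b
    have h2 : 0 < F c' := hpos c' ⟨lt_of_le_of_lt (le_max_left _ _) hcc', hc'b⟩
    rw [hb] at h1; linarith


section
variable {K : Set (EuclideanSpace ℝ (Fin 2))} {h : ℝ → ℝ}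
  {z : EuclideanSpace ℝ (Fin 2)}

lemma arc_convex
    (hsupp : ∀ θ : ℝ, IsLUB ((fun y => (inner ℝ (nvec θ) y : ℝ)) '' K) (h θ))
    {θ₁ θ θ₂ : ℝ} (h1 : θ₁ < θ) (h2 : θ < θ₂) (hlt : θ₂ - θ₁ < π)
    (p1 : 0 < Real.cos θ₁ * z 0 + Real.sin θ₁ * z 1 - h θ₁)
    (p2 : 0 < Real.cos θ₂ * z 0 + Real.sin θ₂ * z 1 - h θ₂) :
    0 < Real.cos θ * z 0 + Real.sin θ * z 1 - h θ := by
  set s1 : ℝ := Real.sin (θ₂ - θ) with hs1d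
  set s2 : ℝ := Real.sin (θ - θ₁) with hs2d
  set s : ℝ := Real.sin (θ₂ - θ₁) with hsd
  have hs1 : 0 < s1 := Real.sin_pos_of_pos_of_lt_pi (by linarith) (by linarith)
  have hs2 : 0 < s2 := Real.sin_pos_of_pos_of_lt_pi (by linarith) (by linarith)
  have hs : 0 < s := Real.sin_pos_of_pos_of_lt_pi (by linarith) (by linarith)
  have idc : s1 * Real.cos θ₁ + s2 * Real.cos θ₂ = s * Real.cos θ := by
    rw [hs1d, hs2d, hsd, Real.sin_sub, Real.sin_sub, Real.sin_sub]; ring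
  have ids : s1 * Real.sin θ₁ + s2 * Real.sin θ₂ = s * Real.sin θ := by
    rw [hs1d, hs2d, hsd, Real.sin_sub, Real.sin_sub, Real.sin_sub]; ring
  have hub : s * h θ ≤ s1 * h θ₁ + s2 * h θ₂ := by
    have hle : h θ ≤ (s1 * h θ₁ + s2 * h θ₂) / s := by
      apply (hsupp θ).2
      rintro x ⟨y, hy, rfl⟩
      show (inner ℝ (nvec θ) y : ℝ) ≤ _
      rw [inner_nvec, le_div_iff₀ hs]
      have b1 : Real.cos θ₁ * y 0 + Real.sin θ₁ * y 1 ≤ h θ₁ := by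
        rw [← inner_nvec θ₁ y]
        exact (hsupp θ₁).1 ⟨y, hy, rfl⟩
      have b2 : Real.cos θ₂ * y 0 + Real.sin θ₂ * y 1 ≤ h θ₂ := by
        rw [← inner_nvec θ₂ y]
        exact (hsupp θ₂).1 ⟨y, hy, rfl⟩
      have key : (Real.cos θ * y 0 + Real.sin θ * y 1) * s
          = s1 * (Real.cos θ₁ * y 0 + Real.sin θ₁ * y 1)
            + s2 * (Real.cos θ₂ * y 0 + Real.sin θ₂ * y 1) := by
        linear_combination (-(y 0)) * idc - y 1 * ids
      rw [key]
      have := mul_le_mul_of_nonneg_left b1 (le_of_lt hs1)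
      have := mul_le_mul_of_nonneg_left b2 (le_of_lt hs2)
      linarith
    calc s * h θ = (h θ) * s := by ring
    _ ≤ ((s1 * h θ₁ + s2 * h θ₂) / s) * s := mul_le_mul_of_nonneg_right hle (le_of_lt hs) |>.trans_eq (by ring) |>.trans_eq rfl
    _ = s1 * h θ₁ + s2 * h θ₂ := div_mul_cancel₀ _ (ne_of_gt hs)
  have keyz : (Real.cos θ * z 0 + Real.sin θ * z 1) * s
      = s1 * (Real.cos θ₁ * z 0 + Real.sin θ₁ * z 1)
        + s2 * (Real.cos θ₂ * z 0 + Real.sin θ₂ * z 1) := by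
    linear_combination (-(z 0)) * idc - z 1 * ids
  nlinarith [mul_pos hs1 p1, mul_pos hs2 p2]

lemma antipodal (hne : K.Nonempty)
    (hsupp : ∀ θ : ℝ, IsLUB ((fun y => (inner ℝ (nvec θ) y : ℝ)) '' K) (h θ))
    (θ : ℝ) :
    (Real.cos θ * z 0 + Real.sin θ * z 1 - h θ)
      + (Real.cos (θ + π) * z 0 + Real.sin (θ + π) * z 1 - h (θ + π)) ≤ 0 := by
  obtain ⟨y, hy⟩ := hne
  have b1 : Real.cos θ * y 0 + Real.sin θ * y 1 ≤ h θ := by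
    rw [← inner_nvec θ y]; exact (hsupp θ).1 ⟨y, hy, rfl⟩
  have b2 : Real.cos (θ+π) * y 0 + Real.sin (θ+π) * y 1 ≤ h (θ+π) := by
    rw [← inner_nvec (θ+π) y]; exact (hsupp (θ+π)).1 ⟨y, hy, rfl⟩
  rw [Real.cos_add_pi, Real.sin_add_pi] at *
  linarith

end


section
variable {h : ℝ → ℝ}

lemma diff_pack (hsm : ContDiff ℝ 2 h) :
    Differentiable ℝ h ∧ Differentiable ℝ (deriv h) ∧ Continuous (deriv (deriv h)) := by
  have h2 : ContDiff ℝ (1 + 1 : ℕ) h := by exact_mod_cast hsm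
  rw [show ((1 + 1 : ℕ) : WithTop ℕ∞) = (1 : WithTop ℕ∞) + 1 by norm_num] at h2
  have h3 := contDiff_succ_iff_deriv.mp h2
  have h4 := contDiff_one_iff_deriv.mp h3.2.2
  exact ⟨h3.1, h4.1, h4.2⟩

lemma per_deriv (hd : Differentiable ℝ h) {c : ℝ} (hper : Function.Periodic h c) :
    Function.Periodic (deriv h) c := by
  intro x
  have heq : (fun y => h (y + c)) = h := funext (fun y => hper y)
  calc deriv h (x + c) = deriv (fun y => h (y + c)) x := (deriv_comp_add_const h c x).symm
  _ = deriv h x := by rw [heq]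

variable (hsm : ContDiff ℝ 2 h) (hpos : ∀ θ, 0 < h θ + deriv (deriv h) θ)
  (hper : Function.Periodic h (2 * π))

noncomputable def Af (h : ℝ → ℝ) (b x : ℝ) : ℝ := deriv h x + ∫ τ in b..x, h τ

include hsm in
lemma Af_hasDeriv (b x : ℝ) :
    HasDerivAt (Af h b) (deriv (deriv h) x + h x) x := by
  obtain ⟨hd1, hd2, hc2⟩ := diff_pack hsm
  have hch : Continuous h := hd1.continuous
  exact ((hd2 x).hasDerivAt).add
    (integral_hasDerivAt_right (hch.intervalIntegrable _ _)
      (hch.stronglyMeasurableAtFilter _ _) hch.continuousAt)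

include hsm hpos in
lemma Af_strictMono (b : ℝ) : StrictMono (Af h b) := by
  apply strictMono_of_deriv_pos
  intro x
  rw [(Af_hasDeriv hsm b x).deriv]
  linarith [hpos x]

include hsm hper in
lemma Af_shift (b x : ℝ) (m : ℤ) : Af h (b + 2 * π * m) (x + 2 * π * m) = Af h b x := by
  obtain ⟨hd1, hd2, hc2⟩ := diff_pack hsm
  have hper' : Function.Periodic (deriv h) (2 * π) := per_deriv hd1 hper
  unfold Af
  have e1 : deriv h (x + 2 * π * m) = deriv h x := by
    have := (hper'.int_mul m) x
    rw [show (m : ℝ) * (2 * π) = 2 * π * m by ring] at this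
    exact this
  have e2 : (∫ τ in (b + 2*π*m)..(x + 2*π*m), h τ) = ∫ τ in b..x, h τ := by
    rw [← integral_comp_add_right]
    congr 1
    funext τ
    have := (hper.int_mul m) τ
    rw [show (m : ℝ) * (2 * π) = 2 * π * m by ring] at this
    exact this
  rw [e1, e2]
include hsm hpos hper in
lemma P_pos : 0 < ∫ τ in (0:ℝ)..(2*π), h τ := by
  obtain ⟨hd1, hd2, hc2⟩ := diff_pack hsm
  have hch : Continuous h := hd1.continuous
  have hper' : Function.Periodic (deriv h) (2 * π) := per_deriv hd1 hper
  have hsum : (0:ℝ) < ∫ τ in (0:ℝ)..(2*π), (h τ + deriv (deriv h) τ) := by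
    apply intervalIntegral_pos_of_pos
    · exact ((hch.add hc2).intervalIntegrable _ _)
    · exact hpos
    · positivity
  have hsplit : (∫ τ in (0:ℝ)..(2*π), (h τ + deriv (deriv h) τ))
      = (∫ τ in (0:ℝ)..(2*π), h τ) + ∫ τ in (0:ℝ)..(2*π), deriv (deriv h) τ :=
    integral_add (hch.intervalIntegrable _ _) (hc2.intervalIntegrable _ _)
  have hFTC : (∫ τ in (0:ℝ)..(2*π), deriv (deriv h) τ) = deriv h (2*π) - deriv h 0 :=
    integral_deriv_eq_sub (fun x _ => hd2 x) (hc2.intervalIntegrable _ _)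
  have hz : deriv h (2*π) = deriv h 0 := by
    have := hper' 0; rwa [zero_add] at this
  rw [hsplit, hFTC, hz] at hsum
  linarith

include hsm hpos hper in
lemma Af_exists_lt (b : ℝ) {G : ℝ} (hG : G < Af h b b) :
    ∃ x, x < b ∧ Af h b x = G := by
  obtain ⟨hd1, hd2, hc2⟩ := diff_pack hsm
  have hch : Continuous h := hd1.continuous
  have hint : ∀ t₁ t₂ : ℝ, IntervalIntegrable h volume t₁ t₂ :=
    fun t₁ t₂ => hch.intervalIntegrable _ _
  have hper' : Function.Periodic (deriv h) (2 * π) := per_deriv hd1 hper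
  set P : ℝ := ∫ τ in (0:ℝ)..(2*π), h τ with hP
  have hPpos : 0 < P := P_pos hsm hpos hper
  have hAb : Af h b b = deriv h b := by unfold Af; rw [integral_same, add_zero]
  have hkey : ∀ n : ℤ, Af h b (b - 2*π*n) = deriv h b - n * P := by
    intro n
    have e1 : deriv h (b - 2*π*n) = deriv h b := by
      have := (hper'.int_mul n) (b - 2*π*n)
      rw [show b - 2*π*n + n * (2*π) = b by ring] at this
      exact this.symm
    have e2 : (∫ τ in (b - 2*π*n)..b, h τ) = n * P := by
      have h1 := hper.intervalIntegral_add_zsmul_eq n (b - 2*π*n) hint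
      rw [show b - 2*π*n + n • (2*π) = b by rw [zsmul_eq_mul]; ring] at h1
      have h2 := hper.intervalIntegral_add_eq (b - 2*π*n) 0
      rw [h1, h2, zero_add, zsmul_eq_mul, hP]
    unfold Af
    rw [e1, intervalIntegral.integral_symm, e2]
    ring
  obtain ⟨n, hn⟩ := exists_nat_gt ((deriv h b - G) / P)
  have hlow : Af h b (b - 2*π*n) < G := by
    have hk := hkey (n : ℤ)
    push_cast at hk
    rw [hk]
    rw [div_lt_iff₀ hPpos] at hn
    linarith
  have hcont : Continuous (Af h b) :=
    continuous_iff_continuousAt.mpr (fun x => (Af_hasDeriv hsm b x).continuousAt)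
  have hle : b - 2*π*n ≤ b := by
    have : (0:ℝ) ≤ 2*π*n := by positivity
    linarith
  have hivt := intermediate_value_Icc hle hcont.continuousOn
  have hmem : G ∈ Icc (Af h b (b - 2*π*n)) (Af h b b) := ⟨le_of_lt hlow, le_of_lt hG⟩
  obtain ⟨x, hx, hAx⟩ := hivt hmem
  refine ⟨x, ?_, hAx⟩
  have := Af_strictMono hsm hpos b
  rw [← this.lt_iff_lt, hAx]
  exact hG
end


section
variable {F : ℝ → ℝ}

lemma no_close
    (arc : ∀ {θ₁ θ θ₂ : ℝ}, θ₁ < θ → θ < θ₂ → θ₂ - θ₁ < π → 0 < F θ₁ → 0 < F θ₂ → 0 < F θ)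
    {a b εa εb : ℝ} (hab : a < b) (hlt : b - a < π) (ha0 : F a = 0)
    (hεa : 0 < εa) (hla : ∀ x ∈ Set.Ioo (a-εa) a, 0 < F x)
    (hεb : 0 < εb) (hlb : ∀ x ∈ Set.Ioo (b-εb) b, 0 < F x) : False := by
  set δ1 : ℝ := min εa ((π - (b-a))/2) with hδ1
  set δ2 : ℝ := min εb (b-a) with hδ2
  have hδ1p : 0 < δ1 := lt_min hεa (by linarith)
  have hδ2p : 0 < δ2 := lt_min hεb (by linarith)
  set x : ℝ := a - δ1/2 with hx
  set x' : ℝ := b - δ2/2 with hx'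
  have hFx : 0 < F x := hla x ⟨by have := min_le_left εa ((π - (b-a))/2); simp only [hx]; linarith, by simp only [hx]; linarith⟩
  have hFx' : 0 < F x' := hlb x' ⟨by have := min_le_left εb (b-a); simp only [hx']; linarith, by simp only [hx']; linarith⟩
  have h1 : x < a := by simp only [hx]; linarith
  have h2 : a < x' := by
    have := min_le_right εb (b-a)
    simp only [hx']; linarith
  have h3 : x' - x < π := by
    have := min_le_right εa ((π - (b-a))/2)
    simp only [hx, hx']; linarith
  have := arc h1 h2 h3 hFx hFx'
  rw [ha0] at this
  exact lt_irrefl 0 this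

lemma dc_unique (hperF : Function.Periodic F (2*π))
    (arc : ∀ {θ₁ θ θ₂ : ℝ}, θ₁ < θ → θ < θ₂ → θ₂ - θ₁ < π → 0 < F θ₁ → 0 < F θ₂ → 0 < F θ)
    (anti : ∀ θ, F θ + F (θ + π) ≤ 0)
    {a b εa εb : ℝ} (ha0 : F a = 0) (hεa : 0 < εa)
    (hla : ∀ x ∈ Set.Ioo (a-εa) a, 0 < F x)
    (hb0 : F b = 0) (hεb : 0 < εb)
    (hlb : ∀ x ∈ Set.Ioo (b-εb) b, 0 < F x) :
    ∃ m : ℤ, b = a + 2*π*m := by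
  have hπ := Real.pi_pos
  set k : ℤ := ⌊(b-a)/(2*π)⌋ with hk
  set d : ℝ := b - a - 2*π*k with hd
  have hper_int : ∀ (m : ℤ) (x : ℝ), F (x + 2*π*m) = F x := by
    intro m x
    have := (hperF.int_mul m) x
    rwa [show (m:ℝ) * (2*π) = 2*π*m by ring] at this
  have hd0 : 0 ≤ d := by
    have h1 : (k:ℝ) ≤ (b-a)/(2*π) := Int.floor_le _
    rw [le_div_iff₀ (by linarith)] at h1
    simp only [hd]; linarith
  have hd2π : d < 2*π := by
    have h1 : (b-a)/(2*π) < k + 1 := Int.lt_floor_add_one _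
    rw [div_lt_iff₀ (by linarith)] at h1
    simp only [hd]; push_cast; linarith
  -- the shifted down-crossing at a + d = b - 2πk
  have hbd : a + d = b - 2*π*k := by simp only [hd]; ring
  have hFad : F (a + d) = 0 := by
    rw [hbd, show b - 2*π*k = b + 2*π*(-k : ℤ) by push_cast; ring, hper_int, hb0]
  have hlad : ∀ x ∈ Set.Ioo (a + d - εb) (a + d), 0 < F x := by
    intro x hx
    have : F x = F (x + 2*π*k) := (hper_int k x).symm
    rw [this]
    apply hlb
    constructor
    · have := hx.1; rw [hbd] at this; linarith
    · have := hx.2; rw [hbd] at this; linarith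
  by_cases hd_zero : d = 0
  · exact ⟨k, by simp only [hd] at hd_zero; linarith⟩
  have hdpos : 0 < d := lt_of_le_of_ne hd0 (Ne.symm hd_zero)
  exfalso
  rcases lt_trichotomy d π with hcase | hcase | hcase
  · -- d < π : down-crossings at a and a+d too close
    exact no_close arc (by linarith) (by linarith) ha0 hεa hla hεb hlad
  · -- d = π : antipodal contradiction
    set δ : ℝ := min εa εb with hδ
    have hδp : 0 < δ := lt_min hεa hεb
    set x : ℝ := a - δ/2 with hxd
    have h1 : 0 < F x := hla x ⟨by have := min_le_left εa εb; simp only [hxd]; linarith, by simp only [hxd]; linarith⟩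
    have h2 : 0 < F (x + π) := by
      apply hlad
      constructor
      · have := min_le_right εa εb; simp only [hxd]; rw [hcase] at *; linarith
      · simp only [hxd]; rw [hcase]; linarith
    linarith [anti x]
  · -- d > π : down-crossings at a+d and a+2π too close
    have hla2π : ∀ x ∈ Set.Ioo (a + 2*π - εa) (a + 2*π), 0 < F x := by
      intro x hx
      rw [show x = (x - 2*π) + 2*π*((1:ℤ):ℝ) by push_cast; ring, hper_int]
      exact hla _ ⟨by push_cast; linarith [hx.1], by push_cast; linarith [hx.2]⟩
    have hFa2π : F (a + 2*π) = 0 := by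
      rw [show a + 2*π = a + 2*π*((1:ℤ):ℝ) by push_cast; ring, hper_int, ha0]
    exact no_close arc (show a + d < a + 2*π by linarith) (by linarith)
      hFad hεb hlad hεa hla2π
end

lemma per_int {f : ℝ → ℝ} (hper : Function.Periodic f (2*π)) (m : ℤ) (x : ℝ) :
    f (x + 2*π*m) = f x := by
  have := (hper.int_mul m) x
  rwa [show (m:ℝ) * (2*π) = 2*π*m by ring] at this


/-- The family of left involutes of `∂K`, parameterized by the starting
normal angle `ϑ₀ ∈ [0, 2π)` and the angle `ϑ > ϑ₀`, covers `ℝ² \ K` bijectively: every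
`z ∉ K` is `I(ϑ₀, ϑ)` for exactly one such pair. -/
theorem stmt_14 (K : Set (EuclideanSpace ℝ (Fin 2)))
    (hne : K.Nonempty) (hcp : IsCompact K) (hcv : Convex ℝ K)
    (h : ℝ → ℝ)
    (hsupp : ∀ θ : ℝ, IsLUB ((fun y => (inner ℝ (nvec θ) y : ℝ)) '' K) (h θ))
    (hsm : ContDiff ℝ 2 h) (hpos : ∀ θ, 0 < h θ + deriv (deriv h) θ)
    (I : ℝ → ℝ → EuclideanSpace ℝ (Fin 2))
    (hI : ∀ θ₀ θ, I θ₀ θ =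
      h θ • nvec θ - ((∫ τ in θ₀..θ, h τ) - deriv h θ₀) • tvec θ) :
    ∀ z : EuclideanSpace ℝ (Fin 2), z ∉ K →
      ∃! p : ℝ × ℝ, p.1 ∈ Set.Ico 0 (2 * Real.pi) ∧ p.1 < p.2 ∧ I p.1 p.2 = z := by
  intro z hz
  have hπ := Real.pi_pos
  obtain ⟨hd1, hd2, hc2⟩ := diff_pack hsm
  have hch : Continuous h := hd1.continuous
  -- periodicity of h
  have hnvec : ∀ θ : ℝ, nvec (θ + 2*π) = nvec θ := by
    intro θ; unfold nvec; rw [Real.cos_add_two_pi, Real.sin_add_two_pi]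
  have hper : Function.Periodic h (2*π) := by
    intro θ
    have h1 := hsupp (θ + 2*π)
    rw [hnvec θ] at h1
    exact h1.unique (hsupp θ)
  -- the functions F and G
  set F : ℝ → ℝ := fun x => Real.cos x * z 0 + Real.sin x * z 1 - h x with hFdef
  set G : ℝ → ℝ := fun x => -Real.sin x * z 0 + Real.cos x * z 1 with hGdef
  have hperF : Function.Periodic F (2*π) := by
    intro x
    simp only [hFdef]
    rw [Real.cos_add_two_pi, Real.sin_add_two_pi, hper x]
  have hperG : Function.Periodic G (2*π) := by
    intro x
    simp only [hGdef]
    rw [Real.cos_add_two_pi, Real.sin_add_two_pi]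
  -- derivatives
  have hF' : ∀ x, HasDerivAt F (G x - deriv h x) x := by
    intro x
    have h1 : HasDerivAt (fun y => Real.cos y * z 0 + Real.sin y * z 1)
        (-Real.sin x * z 0 + Real.cos x * z 1) x :=
      ((Real.hasDerivAt_cos x).mul_const _).add ((Real.hasDerivAt_sin x).mul_const _)
    exact h1.sub (hd1 x).hasDerivAt
  have hG' : ∀ x, HasDerivAt (fun y => G y - deriv h y)
      (-(Real.cos x * z 0 + Real.sin x * z 1) - deriv (deriv h) x) x := by
    intro x
    have h1 : HasDerivAt G (-(Real.cos x) * z 0 + -Real.sin x * z 1) x := by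
      simp only [hGdef]
      exact (((Real.hasDerivAt_sin x).neg).mul_const _).add ((Real.hasDerivAt_cos x).mul_const _)
    have h2 := h1.sub (hd2 x).hasDerivAt
    exact h2.congr_deriv (by ring)
  have hcF'' : Continuous (fun x => -(Real.cos x * z 0 + Real.sin x * z 1) - deriv (deriv h) x) := by
    apply Continuous.sub _ hc2
    exact ((Real.continuous_cos.mul continuous_const).add
      (Real.continuous_sin.mul continuous_const)).neg
  -- translation between the involute equation and (F, G)
  have hAf_eq : ∀ θ₀ θ : ℝ, Af h θ θ₀ = deriv h θ₀ - ∫ τ in θ₀..θ, h τ := by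
    intro θ₀ θ
    unfold Af
    rw [intervalIntegral.integral_symm]
    ring
  have hiff : ∀ θ₀ θ : ℝ, I θ₀ θ = z ↔ (F θ = 0 ∧ G θ = Af h θ θ₀) := by
    intro θ₀ θ
    rw [hI, decomp, hAf_eq]
    constructor
    · rintro ⟨e1, e2⟩
      constructor
      · simp only [hFdef]; linarith
      · simp only [hGdef]; linarith
    · rintro ⟨e1, e2⟩
      simp only [hFdef] at e1
      simp only [hGdef] at e2
      exact ⟨by linarith, by linarith⟩
  -- arc convexity and antipodal properties of F
  have arcF : ∀ {θ₁ θ θ₂ : ℝ}, θ₁ < θ → θ < θ₂ → θ₂ - θ₁ < π →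
      0 < F θ₁ → 0 < F θ₂ → 0 < F θ := by
    intro θ₁ θ θ₂ h1 h2 h3 p1 p2
    exact arc_convex hsupp h1 h2 h3 p1 p2
  have antiF : ∀ θ : ℝ, F θ + F (θ + π) ≤ 0 := by
    intro θ
    exact antipodal hne hsupp θ
  -- every solution is a down-crossing with left-positivity
  have hsol : ∀ u0 u1 : ℝ, u0 < u1 → F u1 = 0 → G u1 = Af h u1 u0 →
      ∃ ε > 0, ∀ x ∈ Set.Ioo (u1 - ε) u1, 0 < F x := by
    intro u0 u1 hlt hF0 hGe
    have hmono := Af_strictMono hsm hpos u1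
    have hAu : Af h u1 u1 = deriv h u1 := by unfold Af; rw [integral_same, add_zero]
    have hneg : G u1 - deriv h u1 < 0 := by
      have h2 := hmono hlt
      rw [hAu] at h2
      rw [hGe]
      linarith
    exact aux_leftpos (hF' u1) hF0 hneg
  -- existence of a down-crossing
  obtain ⟨σ, hσ⟩ := sep hne hcp hcv hsupp hz
  have hσF : 0 < F σ := hσ
  have hcontF : Continuous F := continuous_iff_continuousAt.mpr (fun x => (hF' x).continuousAt)
  set S : Set ℝ := {x | x ∈ Set.Icc σ (σ + π) ∧ F x ≤ 0} with hSdef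
  have hSclosed : IsClosed S :=
    isClosed_Icc.inter (isClosed_le hcontF continuous_const)
  have hSne : σ + π ∈ S := by
    refine ⟨⟨by linarith, le_refl _⟩, ?_⟩
    have := antiF σ
    linarith
  have hbdd : BddBelow S := ⟨σ, fun x hx => hx.1.1⟩
  set b : ℝ := sInf S with hbdef
  have hbS : b ∈ S := hSclosed.csInf_mem ⟨_, hSne⟩ hbdd
  have hσb : σ < b := by
    rcases lt_or_eq_of_le hbS.1.1 with hlt | heq
    · exact hlt
    · exfalso
      have := hbS.2
      rw [← heq] at this
      linarith
  have hposIoo : ∀ x ∈ Set.Ioo σ b, 0 < F x := by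
    intro x hx
    by_contra hnp
    push_neg at hnp
    have hxS : x ∈ S := ⟨⟨le_of_lt hx.1, le_trans (le_of_lt hx.2) hbS.1.2⟩, hnp⟩
    exact absurd (csInf_le hbdd hxS) (not_le.mpr hx.2)
  have hFb0 : F b = 0 := by
    refine le_antisymm hbS.2 ?_
    have ht : Filter.Tendsto F (nhdsWithin b (Set.Iio b)) (nhds (F b)) :=
      (hcontF.continuousAt).continuousWithinAt
    refine ge_of_tendsto ht ?_
    filter_upwards [Ioo_mem_nhdsLT_of_mem (show b ∈ Set.Ioc σ b from ⟨hσb, le_refl _⟩)]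
      with x hx
    exact le_of_lt (hposIoo x hx)
  have hF'b : G b - deriv h b < 0 := by
    apply dc_deriv_neg hF' hG' hcF'' hσb hposIoo hFb0
    have he : Real.cos b * z 0 + Real.sin b * z 1 = h b := by
      simp only [hFdef] at hFb0
      linarith
    rw [he]
    linarith [hpos b]
  have hGb : G b < Af h b b := by
    have hAu : Af h b b = deriv h b := by unfold Af; rw [integral_same, add_zero]
    rw [hAu]; linarith
  obtain ⟨τ0, hτ0lt, hτ0⟩ := Af_exists_lt hsm hpos hper b hGb
  -- normalize the starting angle into [0, 2π)
  set k : ℤ := ⌊τ0 / (2*π)⌋ with hkdef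
  have hk1 : 0 ≤ τ0 - 2*π*k := by
    have h1 : (k:ℝ) ≤ τ0/(2*π) := Int.floor_le _
    rw [le_div_iff₀ (by linarith)] at h1
    linarith
  have hk2 : τ0 - 2*π*k < 2*π := by
    have h1 : τ0/(2*π) < k + 1 := Int.lt_floor_add_one _
    rw [div_lt_iff₀ (by linarith)] at h1
    push_cast at h1
    linarith
  -- constructed solution
  have hFp : F (b - 2*π*k) = 0 := by
    rw [show b - 2*π*(k:ℝ) = b + 2*π*((-k : ℤ):ℝ) by push_cast; ring, per_int hperF, hFb0]
  have hGp : G (b - 2*π*k) = Af h (b - 2*π*k) (τ0 - 2*π*k) := by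
    have e1 : G (b - 2*π*(k:ℝ)) = G b := by
      rw [show b - 2*π*(k:ℝ) = b + 2*π*((-k : ℤ):ℝ) by push_cast; ring, per_int hperG]
    have e2 := Af_shift hsm hper b τ0 (-k)
    rw [show b + 2*π*((-k : ℤ):ℝ) = b - 2*π*(k:ℝ) by push_cast; ring,
        show τ0 + 2*π*((-k : ℤ):ℝ) = τ0 - 2*π*(k:ℝ) by push_cast; ring] at e2
    rw [e1, e2, hτ0]
  refine ⟨(τ0 - 2*π*k, b - 2*π*k), ⟨⟨hk1, hk2⟩, by simp only []; linarith, ?_⟩, ?_⟩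
  · rw [hiff]
    exact ⟨hFp, hGp⟩
  · -- uniqueness
    rintro ⟨q0, q1⟩ ⟨hq0, hqlt, hqz⟩
    simp only [Set.mem_Ico] at hq0
    rw [hiff] at hqz
    obtain ⟨hqF, hqG⟩ := hqz
    simp only [] at hqlt hqF hqG
    -- left positivity at both down-crossings
    obtain ⟨εp, hεp, hlp⟩ := hsol (τ0 - 2*π*k) (b - 2*π*k) (by linarith) hFp hGp
    obtain ⟨εq, hεq, hlq⟩ := hsol q0 q1 hqlt hqF hqG
    obtain ⟨m, hm⟩ := dc_unique hperF arcF antiF hFp hεp hlp hqF hεq hlq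
    -- match the starting angles
    have hAq : Af h q1 q0 = Af h q1 ((τ0 - 2*π*k) + 2*π*m) := by
      have e2 := Af_shift hsm hper (b - 2*π*k) (τ0 - 2*π*k) m
      calc Af h q1 q0 = G q1 := hqG.symm
        _ = G (b - 2*π*k) := by rw [hm]; exact per_int hperG m _
        _ = Af h (b - 2*π*k) (τ0 - 2*π*k) := hGp
        _ = Af h q1 ((τ0 - 2*π*k) + 2*π*m) := by rw [hm]; exact e2.symm
    have hinj := (Af_strictMono hsm hpos q1).injective hAq
    have hm0 : m = 0 := by
      have h1 : q0 = τ0 - 2*π*k + 2*π*m := hinj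
      have h2 : -(2*π) < 2*π*(m:ℝ) := by linarith
      have h3 : 2*π*(m:ℝ) < 2*π := by linarith
      have h4 : (-1 : ℝ) < (m:ℝ) := by nlinarith
      have h5 : ((m:ℝ)) < 1 := by nlinarith
      have h6 : (-1 : ℤ) < m := by exact_mod_cast h4
      have h7 : m < 1 := by exact_mod_cast h5
      omega
    have hq1 : q1 = b - 2*π*k := by
      rw [hm, hm0]
      push_cast
      ring
    have hq0' : q0 = τ0 - 2*π*k := by
      rw [hinj, hm0]
      push_cast
      ring
    exact Prod.ext hq0' hq1
end

section
/- Let $x_1 = (0,0)$, $x_2 = (0,2)$, $x_3 = (1, 2\sqrt{2})$, $x_4 = (-1, 2\sqrt{2})$ in $\mathbb{R}^2$. Then: (a) the ordered set $\{x_1, x_2, x_3, x_4\}$ is a self-distancing set, i.e. $\|x_j - x_i\| \le \|x_k - x_i\|$ whenever $i \le j \le k$; (b) there is no continuous map $\gamma : [0,1] \to \mathbb{R}^2$ satisfying the self-distancing property and admitting parameters $0 \le t_1 \le t_2 \le t_3 \le t_4 \le 1$ with $\gamma(t_m) = x_m$ for $m = 1, 2, 3, 4$. Hence this self-distancing set is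 not SDC-extendible. -/
lemma vec2_sub (a b c d : ℝ) : vec2 a b - vec2 c d = vec2 (a-c) (b-d) := by
  unfold vec2
  ext i
  fin_cases i <;> simp [WithLp.equiv_symm_apply]

lemma norm_vec2 (a b : ℝ) : ‖vec2 a b‖ = Real.sqrt (a^2 + b^2) := by
  rw [EuclideanSpace.norm_eq]
  simp [vec2, WithLp.equiv_symm_apply, Fin.sum_univ_two, Real.norm_eq_abs, sq_abs]

lemma vec2_eta (p : EuclideanSpace ℝ (Fin 2)) : vec2 (p 0) (p 1) = p := by
  ext i; fin_cases i <;> rfl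

lemma sq2 : Real.sqrt 2 ^ 2 = 2 := Real.sq_sqrt (by norm_num)

lemma alg (a b : ℝ) (h1 : a^2 + b^2 = 9)
    (h2 : a^2 + (b-2)^2 = 1^2 + (2*Real.sqrt 2 - 2)^2) : a^2 = 1 := by
  have hb : b = 2*Real.sqrt 2 := by nlinarith [sq2]
  have hb2 : b^2 = 8 := by rw [hb]; nlinarith [sq2]
  linarith

lemma nA : ‖vec2 0 2‖ = 2 := by
  rw [norm_vec2, show (0:ℝ)^2 + 2^2 = 2^2 by norm_num, Real.sqrt_sq (by norm_num)]

lemma nB : ‖vec2 1 (2 * Real.sqrt 2)‖ = 3 := by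
  rw [norm_vec2]
  have : (1:ℝ)^2 + (2*Real.sqrt 2)^2 = 9 := by nlinarith [sq2]
  rw [this, show (9:ℝ) = 3^2 by norm_num, Real.sqrt_sq (by norm_num)]

lemma nC : ‖vec2 (-1) (2 * Real.sqrt 2)‖ = 3 := by
  rw [norm_vec2]
  have : (-1:ℝ)^2 + (2*Real.sqrt 2)^2 = 9 := by nlinarith [sq2]
  rw [this, show (9:ℝ) = 3^2 by norm_num, Real.sqrt_sq (by norm_num)]

lemma nE : ‖vec2 (-1) (2 * Real.sqrt 2 - 2)‖ = ‖vec2 1 (2 * Real.sqrt 2 - 2)‖ := by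
  rw [norm_vec2, norm_vec2]; norm_num

/-- Example `si^4`. The four ordered points
`x₁ = (0,0)`, `x₂ = (0,2)`, `x₃ = (1, 2√2)`, `x₄ = (-1, 2√2)` form a self-distancing set,
but there is no continuous self-distancing curve on `[0,1]` passing through them in this
order: the set is not SDC-extendible. -/
theorem stmt_15 (x : Fin 4 → EuclideanSpace ℝ (Fin 2))
    (hx : x = ![vec2 0 0, vec2 0 2, vec2 1 (2 * Real.sqrt 2),
      vec2 (-1) (2 * Real.sqrt 2)]) :
    (∀ i j k : Fin 4, i ≤ j → j ≤ k → ‖x j - x i‖ ≤ ‖x k - x i‖) ∧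
    ¬ ∃ (γ : ℝ → EuclideanSpace ℝ (Fin 2)) (t : Fin 4 → ℝ),
        ContinuousOn γ (Set.Icc 0 1) ∧
        (∀ t₁ ∈ Set.Icc (0:ℝ) 1, ∀ t₂ ∈ Set.Icc (0:ℝ) 1, ∀ t₃ ∈ Set.Icc (0:ℝ) 1,
          t₁ ≤ t₂ → t₂ ≤ t₃ → ‖γ t₂ - γ t₁‖ ≤ ‖γ t₃ - γ t₁‖) ∧
        (∀ m, t m ∈ Set.Icc (0:ℝ) 1) ∧ Monotone t ∧ (∀ m, γ (t m) = x m) := by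
  subst hx
  constructor
  · intro i j k hij hjk
    fin_cases i <;> fin_cases j <;> fin_cases k <;>
      first
        | exact absurd hij (by decide)
        | exact absurd hjk (by decide)
        | (simp_all <;> norm_num [vec2_sub, nA, nB, nC, nE, norm_nonneg])
  · rintro ⟨γ, t, hcont, hsd, ht01, htmono, hγt⟩
    have h02 : t 0 ≤ t 2 := htmono (by decide)
    have h23 : t 2 ≤ t 3 := htmono (by decide)
    have h12 : t 1 ≤ t 2 := htmono (by decide)
    -- values of γ at the t's
    have g0 : γ (t 0) = vec2 0 0 := hγt 0
    have g1 : γ (t 1) = vec2 0 2 := hγt 1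
    have g2 : γ (t 2) = vec2 1 (2 * Real.sqrt 2) := hγt 2
    have g3 : γ (t 3) = vec2 (-1) (2 * Real.sqrt 2) := hγt 3
    -- key: on [t 2, t 3], first coordinate squared is 1
    have key : ∀ s ∈ Set.Icc (t 2) (t 3), (γ s 0)^2 = 1 := by
      intro s hs
      have hs0 : s ∈ Set.Icc (0:ℝ) 1 :=
        ⟨le_trans (ht01 2).1 hs.1, le_trans hs.2 (ht01 3).2⟩
      have e1a := hsd (t 0) (ht01 0) (t 2) (ht01 2) s hs0 h02 hs.1
      have e1b := hsd (t 0) (ht01 0) s hs0 (t 3) (ht01 3) (le_trans h02 hs.1) hs.2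
      have e2a := hsd (t 1) (ht01 1) (t 2) (ht01 2) s hs0 h12 hs.1
      have e2b := hsd (t 1) (ht01 1) s hs0 (t 3) (ht01 3) (le_trans h12 hs.1) hs.2
      rw [g0, g2] at e1a
      rw [g0, g3] at e1b
      rw [g1, g2] at e2a
      rw [g1, g3] at e2b
      have hγs : γ s = vec2 (γ s 0) (γ s 1) := (vec2_eta _).symm
      rw [hγs, vec2_sub] at e1a e1b e2a e2b
      rw [vec2_sub] at e1a e1b e2a e2b
      norm_num [nB, nC] at e1a e1b e2a e2b
      have E1 : ‖vec2 (γ s 0) (γ s 1)‖ = 3 := le_antisymm e1b e1a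
      rw [nE] at e2b
      have E2 : ‖vec2 (γ s 0) (γ s 1 - 2)‖ = ‖vec2 1 (2 * Real.sqrt 2 - 2)‖ :=
        le_antisymm e2b e2a
      have hE1 : (γ s 0)^2 + (γ s 1)^2 = 9 := by
        have := congrArg (·^2) E1
        rw [norm_vec2] at this
        simp only at this
        rwa [Real.sq_sqrt (by positivity), show (3:ℝ)^2 = 9 by norm_num] at this
      have hE2 : (γ s 0)^2 + (γ s 1 - 2)^2 = 1^2 + (2 * Real.sqrt 2 - 2)^2 := by
        have := congrArg (·^2) E2
        rw [norm_vec2, norm_vec2] at this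
        simp only at this
        rwa [Real.sq_sqrt (by positivity), Real.sq_sqrt (by positivity)] at this
      exact alg _ _ hE1 hE2
    -- continuity of the first coordinate
    have hsub : Set.Icc (t 2) (t 3) ⊆ Set.Icc (0:ℝ) 1 := by
      intro s hs
      exact ⟨le_trans (ht01 2).1 hs.1, le_trans hs.2 (ht01 3).2⟩
    have hf : ContinuousOn (fun u => γ u 0) (Set.Icc (t 2) (t 3)) :=
      (EuclideanSpace.proj (0 : Fin 2)).continuous.comp_continuousOn (hcont.mono hsub)
    have hft2 : γ (t 2) 0 = 1 := by rw [g2]; rfl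
    have hft3 : γ (t 3) 0 = -1 := by rw [g3]; rfl
    have hivt := intermediate_value_Icc' h23 hf
    have h0mem : (0:ℝ) ∈ Set.Icc (γ (t 3) 0) (γ (t 2) 0) := by
      rw [hft2, hft3]; constructor <;> norm_num
    obtain ⟨s, hs, hfs⟩ := hivt h0mem
    have hfs' : γ s 0 = 0 := hfs
    have := key s hs
    rw [hfs'] at this
    norm_num at this
end

section
/- Let $2\sqrt{2} < \rho < \pi$ and set $\xi_1 = (0,0)$, $\xi_2 = (0,2)$, $\xi_3 = (2,0)$, $\xi_4 = (\rho, 2)$ in $\mathbb{R}^2$. Then: (a) the ordered set $\{\xi_1, \xi_2, \xi_3, \xi_4\}$ is a self-distancing set, i.e. $\|\xi_j - \xi_i\| \le \|\xi_k - \xi_i\|$ whenever $i \le j \le k$; (b) there is no continuous map $\gamma : [0,1] \to \mathbb{R}^2$ satisfying the self-distancing property and admitting parameters $0 \le t_1 \le t_2 \le t_3 \le t_4 \le 1$ with $\gamma(t_m) = \xi_m$ for $m = 1, 2, 3, 4$. Hence this self-distancing set is not SDC-extendible. -/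
open Real Set

private lemma nsq2 (p q : EuclideanSpace ℝ (Fin 2)) :
    ‖p - q‖^2 = (p 0 - q 0)^2 + (p 1 - q 1)^2 := by
  rw [EuclideanSpace.norm_eq, Real.sq_sqrt (by positivity)]
  simp [Fin.sum_univ_two, Real.norm_eq_abs, sq_abs]

private lemma sq_le' {x y : ℝ} (hy : 0 ≤ y) (h : x^2 ≤ y^2) : x ≤ y := by nlinarith
private lemma sqeq {a b : ℝ} (ha : 0 ≤ a) (hb : 0 ≤ b) (h : a^2 = b^2) : a = b :=
  le_antisymm (by nlinarith) (by nlinarith)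

private lemma coordX (Xu Yu c s l : ℝ) (hp : s^2 + c^2 = 1) (hF : Xu*c + Yu*s = 2)
    (hl : l = Xu*s - Yu*c) : Xu = 2*c + l*s ∧ Yu = 2*s - l*c := by
  subst hl
  constructor
  · linear_combination c*hF - Xu*hp
  · linear_combination s*hF - Yu*hp

private lemma distpt (Xu Yu c s l a b : ℝ) (hp : s^2+c^2 = 1) (hF : Xu*c + Yu*s = 2)
    (hl : l = Xu*s - Yu*c) :
    (Xu - a)^2 + (Yu - b)^2 = l^2 + 4 + a^2 + b^2 - 2*a*(2*c+l*s) - 2*b*(2*s-l*c) := by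
  obtain ⟨h1, h2⟩ := coordX Xu Yu c s l hp hF hl
  rw [h1, h2]
  linear_combination (4+l^2)*hp

private lemma stepLemma (a b S C : ℝ) (hS : 0 < S) (hSC : S^2 + C^2 = 1)
    (h1 : b^2 ≤ a^2 - 4*a*S + 8*(1-C)) (h2 : 2*S ≤ a) (h3 : 2*(1-C) ≤ b) :
    b + 2*S - 2*(1-C) ≤ a := by
  by_contra hcon
  push_neg at hcon
  have hu : 0 ≤ 1 - C := by nlinarith [sq_nonneg S]
  have hfac2 : 0 ≤ a + b + (2*S - 2*(1-C)) - 4*S := by linarith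
  rcases eq_or_lt_of_le hfac2 with heq | hlt
  · have ha : a = 2*S := by linarith
    linarith
  · have hE : 0 < (b + (2*S-2*(1-C)) - a) * (a + b + (2*S-2*(1-C)) - 4*S) :=
      mul_pos (by linarith) hlt
    nlinarith [mul_nonneg hu (by linarith : (0:ℝ) ≤ b - 2*(1-C))]

private lemma negex (m s c ρ : ℝ) (hm : 0 ≤ m) (hs : 0 < s) (hc : 0 ≤ c)
    (hρ : 2 ≤ ρ) (hρ2 : ρ < 3.15)
    (A : 8*s ≤ m^2 - 4*m*c) (B : m^2 + 4*m*s + 8 - 8*c ≤ (ρ-2)^2 + 4) : False := by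
  have hm0 : 0 < m := by nlinarith
  have h4c : 4*c < m := by nlinarith [mul_nonneg hm hc]
  nlinarith [sq_nonneg (4*c-1), mul_pos hm0 hs, mul_nonneg hm hc]

private lemma halfang (x : ℝ) : sin (x/2)^2 = (1 - cos x)/2 := by
  have h := Real.cos_two_mul (x/2)
  rw [show 2*(x/2) = x by ring] at h
  have h2 := Real.sin_sq_add_cos_sq (x/2)
  linarith

-- extracted arithmetic steps (kept separate so linarith works in a tiny context)
private lemma innerStep (A B l c s : ℝ)
    (hdi : (A - 0)^2 + (B - 2)^2 = l^2 + 4 + 0^2 + 2^2 - 2*0*(2*c+l*s) - 2*2*(2*s-l*c))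
    (hin : (2-0)^2 + (0-2)^2 ≤ (A - 0)^2 + (B - 2)^2) :
    8*s ≤ l^2 + 4*l*c := by nlinarith [hdi, hin]

private lemma outerStep (A B l c s ρ : ℝ)
    (hdo : (A - 2)^2 + (B - 0)^2 = l^2 + 4 + 2^2 + 0^2 - 2*2*(2*c+l*s) - 2*0*(2*s-l*c))
    (hout : (A - 2)^2 + (B - 0)^2 ≤ (ρ-2)^2 + (2-0)^2) :
    l^2 - 4*l*s + 8 - 8*c ≤ (ρ-2)^2 + 4 := by nlinarith [hdo, hout]

private lemma cardStep (A B l c s : ℝ)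
    (hR : (A - 2*c)^2 + (B - 2*s)^2 = l^2)
    (hp : s^2 + c^2 = 1)
    (hc : (2 - 2*c)^2 + (0 - 2*s)^2 ≤ (A - 2*c)^2 + (B - 2*s)^2) :
    8 - 8*c ≤ l^2 := by nlinarith [hR, hc, hp]

private lemma lamSineStep (l S C cθ : ℝ) (hl : 0 < l) (hS : 0 < S) (hC0 : 0 ≤ C)
    (hC1 : C ≤ 1) (hSC : S^2 + C^2 = 1) (hcθ : cθ ≤ C) (hl2 : 8 - 8*cθ ≤ l^2) :
    2*(1 - C) ≤ l * S := by
  have h8 : 8*(1 - C) ≤ l^2 := by nlinarith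
  have hq : (2*(1-C))^2 ≤ (l * S)^2 := by
    nlinarith [mul_le_mul_of_nonneg_right h8 (sq_nonneg S)]
  exact sq_le' (mul_nonneg hl.le hS.le) hq

private lemma lam2SStep (l S C cθ : ℝ) (hl : 0 < l) (hS : 0 < S) (hC0 : 0 ≤ C)
    (hC1 : C ≤ 1) (hSC : S^2 + C^2 = 1) (hcθ : cθ ≤ C) (hl2 : 8 - 8*cθ ≤ l^2) :
    2*S ≤ l := by
  have h8 : 8*(1 - C) ≤ l^2 := by nlinarith
  have hq : (2*S)^2 ≤ l^2 := by nlinarith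
  exact sq_le' hl.le hq

private lemma lam2uStep (l S C cθ : ℝ) (hl : 0 < l) (hS : 0 < S) (hC0 : 0 ≤ C)
    (hC1 : C ≤ 1) (hSC : S^2 + C^2 = 1) (hcθ : cθ ≤ C) (hl2 : 8 - 8*cθ ≤ l^2) :
    2*(1 - C) ≤ l := by
  have h8 : 8*(1 - C) ≤ l^2 := by nlinarith
  have hq : (2*(1 - C))^2 ≤ l^2 := by nlinarith
  exact sq_le' hl.le hq

private lemma baseStep (l S C : ℝ) (hl : 0 < l) (hS : 0 < S) (hC0 : 0 ≤ C)
    (hC1 : C ≤ 1) (hS1 : S ≤ 1) (hSC : S^2 + C^2 = 1) (hl2 : 8 - 8*C ≤ l^2) :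
    2*S - 2*(1 - C) ≤ l := by
  rcases le_or_gt (2*S - 2*(1 - C)) 0 with hgneg | hgpos
  · linarith
  · refine sq_le' hl.le ?_
    nlinarith

private lemma finalNumeric (ρ Nr δ S C : ℝ) (hπρ : 0 < π - ρ)
    (hNr : 4 ≤ Nr) (hδ : δ = π/(2*Nr)) (hδpos : 0 < δ) (hδ1 : δ ≤ 1)
    (hsinlb : δ - δ^3/4 < S) (hcosub : 1 - C ≤ δ^2/2)
    (hceil : π^2/(2*(π-ρ)) ≤ Nr) :
    ρ < Nr*(2*S - 2*(1 - C)) := by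
  have hNpos : 0 < Nr := by linarith
  have hkey1 : 2*Nr*δ = π := by rw [hδ]; field_simp
  have hπδ : π*δ ≤ π - ρ := by
    have h1 : π^2 ≤ Nr*(2*(π-ρ)) := (div_le_iff₀ (by positivity)).1 hceil
    have h2 : π*δ*(2*Nr) = π^2 := by rw [hδ]; field_simp
    nlinarith [hπρ, hNpos]
  have hS1 : 2*Nr*(δ - δ^3/4) < 2*Nr*S := by
    have := mul_lt_mul_of_pos_left hsinlb (show (0:ℝ) < 2*Nr by linarith)
    linarith
  have hC1 : 2*Nr*(1 - C) ≤ Nr*δ^2 := by nlinarith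
  have hNδ2 : Nr*δ^2 = (π/2)*δ := by nlinarith [hkey1]
  have hNδ3 : Nr*δ^3 = (π/2)*δ^2 := by
    have : Nr*δ^3 = (Nr*δ)*δ^2 := by ring
    rw [this]; nlinarith [hkey1]
  nlinarith [hS1, hC1, hNδ2, hNδ3, hkey1, hπδ, hδpos.le, hδ1, Real.pi_pos]

set_option maxHeartbeats 1000000 in
private lemma no_curve (ρ : ℝ) (hρ₁ : 2 * Real.sqrt 2 < ρ) (hρ₂ : ρ < Real.pi) :
    ¬ ∃ (γ : ℝ → EuclideanSpace ℝ (Fin 2)) (t : Fin 4 → ℝ),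
        ContinuousOn γ (Set.Icc 0 1) ∧
        (∀ t₁ ∈ Set.Icc (0:ℝ) 1, ∀ t₂ ∈ Set.Icc (0:ℝ) 1, ∀ t₃ ∈ Set.Icc (0:ℝ) 1,
          t₁ ≤ t₂ → t₂ ≤ t₃ → ‖γ t₂ - γ t₁‖ ≤ ‖γ t₃ - γ t₁‖) ∧
        (∀ m, t m ∈ Set.Icc (0:ℝ) 1) ∧ Monotone t ∧
        (∀ m, γ (t m) = ![vec2 0 0, vec2 0 2, vec2 2 0, vec2 ρ 2] m) := by
  rintro ⟨γ, t, hcont, hsdc, hmem, hmono, hpass⟩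
  have hsq2 : Real.sqrt 2 ^ 2 = 2 := Real.sq_sqrt (by norm_num)
  have hs2n : (0:ℝ) ≤ Real.sqrt 2 := Real.sqrt_nonneg 2
  have hs2ge1 : (1:ℝ) ≤ Real.sqrt 2 := by nlinarith
  have hρge2 : (2:ℝ) ≤ ρ := by nlinarith
  have hρlt : ρ < 3.15 := by linarith [Real.pi_lt_d2]
  have hπpos := Real.pi_pos
  have hpi314 : (3.14:ℝ) < π := by linarith [Real.pi_gt_d2]
  -- the four points
  have hg0 : γ (t 0) = vec2 0 0 := by
    have h : (![vec2 0 0, vec2 0 2, vec2 2 0, vec2 ρ 2] : Fin 4 → _) 0 = vec2 0 0 := rfl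
    rw [hpass 0, h]
  have hg1 : γ (t 1) = vec2 0 2 := by
    have h : (![vec2 0 0, vec2 0 2, vec2 2 0, vec2 ρ 2] : Fin 4 → _) 1 = vec2 0 2 := rfl
    rw [hpass 1, h]
  have hg2 : γ (t 2) = vec2 2 0 := by
    have h : (![vec2 0 0, vec2 0 2, vec2 2 0, vec2 ρ 2] : Fin 4 → _) 2 = vec2 2 0 := rfl
    rw [hpass 2, h]
  have hg3 : γ (t 3) = vec2 ρ 2 := by
    have h : (![vec2 0 0, vec2 0 2, vec2 2 0, vec2 ρ 2] : Fin 4 → _) 3 = vec2 ρ 2 := rfl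
    rw [hpass 3, h]
  -- time ordering and membership
  have h01 : t 0 ≤ t 1 := hmono (by decide : (0:Fin 4) ≤ 1)
  have h12 : t 1 ≤ t 2 := hmono (by decide : (1:Fin 4) ≤ 2)
  have h23 : t 2 ≤ t 3 := hmono (by decide : (2:Fin 4) ≤ 3)
  have hm0 := hmem 0
  have hm1 := hmem 1
  have hm2 := hmem 2
  have hm3 := hmem 3
  have hsub12 : Icc (t 1) (t 2) ⊆ Icc (0:ℝ) 1 := fun x hx =>
    ⟨le_trans hm1.1 hx.1, le_trans hx.2 hm2.2⟩
  have hsub23 : Icc (t 2) (t 3) ⊆ Icc (0:ℝ) 1 := fun x hx =>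
    ⟨le_trans hm2.1 hx.1, le_trans hx.2 hm3.2⟩
  -- opaque coordinate functions
  obtain ⟨X, hXdef⟩ : ∃ f : ℝ → ℝ, ∀ s, f s = γ s 0 := ⟨_, fun _ => rfl⟩
  obtain ⟨Y, hYdef⟩ : ∃ f : ℝ → ℝ, ∀ s, f s = γ s 1 := ⟨_, fun _ => rfl⟩
  have hXc : ContinuousOn X (Icc (0:ℝ) 1) := by
    have hXeq : X = fun s => γ s 0 := funext hXdef
    rw [hXeq]
    exact (EuclideanSpace.proj (0 : Fin 2)).continuous.comp_continuousOn hcont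
  have hYc : ContinuousOn Y (Icc (0:ℝ) 1) := by
    have hYeq : Y = fun s => γ s 1 := funext hYdef
    rw [hYeq]
    exact (EuclideanSpace.proj (1 : Fin 2)).continuous.comp_continuousOn hcont
  have hXT1 : X (t 0) = 0 := by rw [hXdef, hg0]; rfl
  have hYT1 : Y (t 0) = 0 := by rw [hYdef, hg0]; rfl
  have hXT2 : X (t 1) = 0 := by rw [hXdef, hg1]; rfl
  have hYT2 : Y (t 1) = 2 := by rw [hYdef, hg1]; rfl
  have hXT3 : X (t 2) = 2 := by rw [hXdef, hg2]; rfl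
  have hYT3 : Y (t 2) = 0 := by rw [hYdef, hg2]; rfl
  have hXT4 : X (t 3) = ρ := by rw [hXdef, hg3]; rfl
  have hYT4 : Y (t 3) = 2 := by rw [hYdef, hg3]; rfl
  -- squared self-distancing in coordinates
  have Pc : ∀ a b c : ℝ, a ∈ Icc (0:ℝ) 1 → b ∈ Icc (0:ℝ) 1 → c ∈ Icc (0:ℝ) 1 →
      a ≤ b → b ≤ c →
      (X b - X a)^2 + (Y b - Y a)^2 ≤ (X c - X a)^2 + (Y c - Y a)^2 := by
    intro a b c ha hb hc hab hbc
    have h := hsdc a ha b hb c hc hab hbc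
    have h2 : ‖γ b - γ a‖^2 ≤ ‖γ c - γ a‖^2 := by
      have h3 := norm_nonneg (γ b - γ a)
      nlinarith
    rw [nsq2, nsq2] at h2
    simp only [← hXdef, ← hYdef] at h2
    exact h2
  -- on [t1,t2] the curve is on the circle of radius 2, upper half
  have circ : ∀ s ∈ Icc (t 1) (t 2), (X s)^2 + (Y s)^2 = 4 ∧ 0 ≤ Y s := by
    intro s hs
    have hs01 : s ∈ Icc (0:ℝ) 1 := hsub12 hs
    have h0s : t 0 ≤ s := le_trans h01 hs.1
    have hA := Pc (t 0) (t 1) s hm0 hm1 hs01 h01 hs.1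
    have hB := Pc (t 0) s (t 2) hm0 hs01 hm2 h0s hs.2
    have hC := Pc (t 1) s (t 2) hm1 hs01 hm2 hs.1 hs.2
    simp only [hXT1, hYT1, hXT2, hYT2, hXT3, hYT3] at hA hB hC
    constructor
    · nlinarith [hA, hB]
    · nlinarith [hA, hB, hC]
  -- the curve covers the quarter arc
  have harc : ∀ θ' : ℝ, θ' ∈ Icc 0 (π/2) →
      ∃ s, s ∈ Icc (t 1) (t 2) ∧ X s = 2*Real.cos θ' ∧ Y s = 2*Real.sin θ' := by
    intro θ' hθ'
    have hc0 : 0 ≤ Real.cos θ' := Real.cos_nonneg_of_mem_Icc ⟨by linarith [hθ'.1], hθ'.2⟩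
    have hc1 : Real.cos θ' ≤ 1 := Real.cos_le_one θ'
    have hs0 : 0 ≤ Real.sin θ' := Real.sin_nonneg_of_nonneg_of_le_pi hθ'.1 (by linarith [hθ'.2])
    have hXc' : ContinuousOn X (Icc (t 1) (t 2)) := hXc.mono hsub12
    have hmemv : 2*Real.cos θ' ∈ Icc (X (t 1)) (X (t 2)) := by
      rw [hXT2, hXT3]; exact ⟨by linarith, by linarith⟩
    obtain ⟨s, hs, hXs⟩ := intermediate_value_Icc h12 hXc' hmemv
    obtain ⟨hcirc, hYpos⟩ := circ s hs
    refine ⟨s, hs, hXs, ?_⟩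
    have hsq : (Y s)^2 = (2*Real.sin θ')^2 := by
      have h := Real.sin_sq_add_cos_sq θ'
      nlinarith [hcirc, hXs]
    exact sqeq hYpos (by linarith) hsq
  -- choice of N and δ
  have hπρ : 0 < π - ρ := by linarith
  obtain ⟨N, hN⟩ : ∃ n : ℕ, n = ⌈π^2 / (2*(π - ρ))⌉₊ + 4 := ⟨_, rfl⟩
  have hN4 : 4 ≤ N := by omega
  have hNR : (4:ℝ) ≤ (N:ℝ) := by exact_mod_cast Nat.cast_le.2 hN4
  have hNpos : (0:ℝ) < (N:ℝ) := by linarith only [hNR]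
  obtain ⟨δ, hδ⟩ : ∃ x : ℝ, x = π/(2*(N:ℝ)) := ⟨_, rfl⟩
  have hδpos : 0 < δ := by rw [hδ]; positivity
  have hNδ : (N:ℝ)*δ = π/2 := by rw [hδ]; field_simp
  have hδsmall : δ ≤ 2/5 := by
    rw [hδ, div_le_iff₀ (by positivity)]
    nlinarith only [Real.pi_lt_d2, hNR]
  obtain ⟨θf, hθf⟩ : ∃ f : ℕ → ℝ, ∀ k, f k = (k:ℝ)*δ := ⟨_, fun _ => rfl⟩
  have hθIcc : ∀ k : ℕ, k ≤ N → θf k ∈ Icc 0 (π/2) := by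
    intro k hk
    have hkR : (k:ℝ) ≤ (N:ℝ) := by exact_mod_cast hk
    rw [hθf]
    constructor
    · exact mul_nonneg (Nat.cast_nonneg k) hδpos.le
    · rw [← hNδ]
      have := mul_le_mul_of_nonneg_right hkR hδpos.le
      linarith only [this]
  -- arc points
  have harcN : ∀ k : ℕ, ∃ s, s ∈ Icc (t 1) (t 2) ∧
      (k ≤ N → X s = 2*Real.cos (θf k) ∧ Y s = 2*Real.sin (θf k)) := by
    intro k
    by_cases hk : k ≤ N
    · obtain ⟨s, hs, hx1, hx2⟩ := harc (θf k) (hθIcc k hk)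
      exact ⟨s, hs, fun _ => ⟨hx1, hx2⟩⟩
    · exact ⟨t 1, ⟨le_refl _, h12⟩, fun h => absurd h hk⟩
  choose sp hsp hsparc using harcN
  -- gate times
  obtain ⟨u, hudef⟩ : ∃ f : ℕ → ℝ, ∀ k, f k = sInf (Icc (t 2) (t 3) ∩
      (fun x => X x * Real.cos (θf k) + Y x * Real.sin (θf k)) ⁻¹' {2}) := ⟨_, fun _ => rfl⟩
  have hGate : ∀ k : ℕ, k ≤ N → (u k ∈ Icc (t 2) (t 3)) ∧
      (X (u k) * Real.cos (θf k) + Y (u k) * Real.sin (θf k) = 2) ∧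
      (∀ v ∈ Icc (t 2) (t 3), v < u k → X v * Real.cos (θf k) + Y v * Real.sin (θf k) < 2) := by
    intro k hk
    have hθk := hθIcc k hk
    have hck1 : Real.cos (θf k) ≤ 1 := Real.cos_le_one _
    have hsk0 : 0 ≤ Real.sin (θf k) :=
      Real.sin_nonneg_of_nonneg_of_le_pi hθk.1 (by linarith [hθk.2])
    have hck0 : 0 ≤ Real.cos (θf k) := Real.cos_nonneg_of_mem_Icc ⟨by linarith [hθk.1], hθk.2⟩
    have hcs1 : 1 ≤ Real.cos (θf k) + Real.sin (θf k) := by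
      nlinarith only [Real.sin_sq_add_cos_sq (θf k), hsk0, hck0,
        mul_nonneg hck0 hsk0]
    have hFc : ContinuousOn (fun x => X x * Real.cos (θf k) + Y x * Real.sin (θf k))
        (Icc (t 2) (t 3)) :=
      ((hXc.mono hsub23).mul continuousOn_const).add ((hYc.mono hsub23).mul continuousOn_const)
    have hF2 : X (t 2) * Real.cos (θf k) + Y (t 2) * Real.sin (θf k) ≤ 2 := by
      rw [hXT3, hYT3]; nlinarith only [hck1]
    have hF3 : 2 ≤ X (t 3) * Real.cos (θf k) + Y (t 3) * Real.sin (θf k) := by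
      rw [hXT4, hYT4]
      nlinarith only [hcs1, hck0, hρge2, mul_nonneg (sub_nonneg.2 hρge2) hck0]
    obtain ⟨x, hx, hfx⟩ := intermediate_value_Icc h23 hFc ⟨hF2, hF3⟩
    have hSne : (Icc (t 2) (t 3) ∩
        (fun x => X x * Real.cos (θf k) + Y x * Real.sin (θf k)) ⁻¹' {2}).Nonempty :=
      ⟨x, hx, by simpa using hfx⟩
    have hScl : IsClosed (Icc (t 2) (t 3) ∩
        (fun x => X x * Real.cos (θf k) + Y x * Real.sin (θf k)) ⁻¹' {2}) :=
      hFc.preimage_isClosed_of_isClosed isClosed_Icc isClosed_singleton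
    have hSbd : BddBelow (Icc (t 2) (t 3) ∩
        (fun x => X x * Real.cos (θf k) + Y x * Real.sin (θf k)) ⁻¹' {2}) :=
      BddBelow.mono inter_subset_left bddBelow_Icc
    have hmemu : u k ∈ Icc (t 2) (t 3) ∩
        (fun x => X x * Real.cos (θf k) + Y x * Real.sin (θf k)) ⁻¹' {2} := by
      rw [hudef k]
      exact hScl.csInf_mem hSne hSbd
    refine ⟨hmemu.1, by simpa using hmemu.2, ?_⟩
    intro v hv hvu
    by_contra hge
    push_neg at hge
    obtain ⟨x', hx', hfx'⟩ := intermediate_value_Icc hv.1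
      (hFc.mono (fun w hw => ⟨hw.1, le_trans hw.2 hv.2⟩)) ⟨hF2, hge⟩
    have hx'S : x' ∈ Icc (t 2) (t 3) ∩
        (fun x => X x * Real.cos (θf k) + Y x * Real.sin (θf k)) ⁻¹' {2} :=
      ⟨⟨hx'.1, le_trans hx'.2 hv.2⟩, by simpa using hfx'⟩
    have hle : u k ≤ x' := by rw [hudef k]; exact csInf_le hSbd hx'S
    linarith [hx'.2]
  -- basic trig of δ
  have hCS : Real.sin δ ^2 + Real.cos δ ^2 = 1 := Real.sin_sq_add_cos_sq δ
  have hSpos : 0 < Real.sin δ := Real.sin_pos_of_pos_of_lt_pi hδpos (by linarith only [hδsmall, hpi314])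
  have hCpos : 0 ≤ Real.cos δ := Real.cos_nonneg_of_mem_Icc ⟨by linarith only [hδpos.le, hpi314], by linarith only [hδsmall, hpi314]⟩
  have hCle1 : Real.cos δ ≤ 1 := Real.cos_le_one δ
  have htrig : ∀ k : ℕ, 1 ≤ k → k ≤ N →
      0 < Real.sin (θf k) ∧ 0 ≤ Real.cos (θf k) ∧ Real.cos (θf k) ≤ Real.cos δ := by
    intro k h1 h2
    have hθk := hθIcc k h2
    have hk1R : (1:ℝ) ≤ (k:ℝ) := by exact_mod_cast h1
    have hmul := mul_le_mul_of_nonneg_right hk1R hδpos.le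
    have hθpos : 0 < θf k := by rw [hθf]; linarith only [hmul, hδpos]
    have hδθ : δ ≤ θf k := by rw [hθf]; linarith only [hmul]
    exact ⟨Real.sin_pos_of_pos_of_lt_pi hθpos (by linarith only [hθk.2, hπpos]),
      Real.cos_nonneg_of_mem_Icc ⟨by linarith only [hθk.1, hπpos], hθk.2⟩,
      Real.cos_le_cos_of_nonneg_of_le_pi hδpos.le (by linarith only [hθk.2, hπpos]) hδθ⟩
  -- tangent lengths
  obtain ⟨lam, hlamdef⟩ : ∃ f : ℕ → ℝ,
      ∀ k, f k = X (u k) * Real.sin (θf k) - Y (u k) * Real.cos (θf k) := ⟨_, fun _ => rfl⟩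
  have hLam : ∀ k : ℕ, 1 ≤ k → k ≤ N →
      0 < lam k ∧ 8 - 8*Real.cos (θf k) ≤ (lam k)^2 := by
    intro k h1 h2
    obtain ⟨hsk, hck, hckC⟩ := htrig k h1 h2
    obtain ⟨hUmem, hUF, _⟩ := hGate k h2
    have hU01 : u k ∈ Icc (0:ℝ) 1 := hsub23 hUmem
    have hp : Real.sin (θf k)^2 + Real.cos (θf k)^2 = 1 := Real.sin_sq_add_cos_sq _
    have hsp01 : sp k ∈ Icc (0:ℝ) 1 := hsub12 (hsp k)
    have hcard := Pc (sp k) (t 2) (u k) hsp01 hm2 hU01 (hsp k).2 hUmem.1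
    rw [(hsparc k h2).1, (hsparc k h2).2, hXT3, hYT3] at hcard
    have hdist0 := distpt (X (u k)) (Y (u k)) (Real.cos (θf k)) (Real.sin (θf k)) (lam k)
        (2*Real.cos (θf k)) (2*Real.sin (θf k)) hp hUF (hlamdef k)
    have hRHS : (X (u k) - 2*Real.cos (θf k))^2 + (Y (u k) - 2*Real.sin (θf k))^2
        = (lam k)^2 := by
      rw [hdist0]; linear_combination (-4)*hp
    have hcard2 : 8 - 8*Real.cos (θf k) ≤ (lam k)^2 :=
      cardStep (X (u k)) (Y (u k)) (lam k) (Real.cos (θf k)) (Real.sin (θf k)) hRHS hp hcard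
    have hinner := Pc (t 1) (t 2) (u k) hm1 hm2 hU01 h12 hUmem.1
    simp only [hXT2, hYT2, hXT3, hYT3] at hinner
    have houter := Pc (t 2) (u k) (t 3) hm2 hU01 hm3 hUmem.1 hUmem.2
    simp only [hXT3, hYT3, hXT4, hYT4] at houter
    have hdi := distpt (X (u k)) (Y (u k)) (Real.cos (θf k)) (Real.sin (θf k)) (lam k)
        0 2 hp hUF (hlamdef k)
    have hdo := distpt (X (u k)) (Y (u k)) (Real.cos (θf k)) (Real.sin (θf k)) (lam k)
        2 0 hp hUF (hlamdef k)
    have hApos : 8*Real.sin (θf k) ≤ (lam k)^2 + 4*(lam k)*Real.cos (θf k) :=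
      innerStep (X (u k)) (Y (u k)) (lam k) (Real.cos (θf k)) (Real.sin (θf k)) hdi hinner
    have hBneg : (lam k)^2 - 4*(lam k)*Real.sin (θf k) + 8 - 8*Real.cos (θf k)
        ≤ (ρ-2)^2 + 4 :=
      outerStep (X (u k)) (Y (u k)) (lam k) (Real.cos (θf k)) (Real.sin (θf k)) ρ hdo houter
    have hc1 : Real.cos (θf k) < 1 := by
      have h0δ : Real.cos δ < 1 := by
        have h := Real.cos_lt_cos_of_nonneg_of_le_pi (le_refl (0:ℝ))
          (by linarith only [hδsmall, hpi314]) hδpos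
        rwa [Real.cos_zero] at h
      linarith only [hckC, h0δ]
    have hl2pos : 0 < (lam k)^2 := lt_of_lt_of_le (by linarith only [hc1]) hcard2
    rcases lt_trichotomy (lam k) 0 with hneg | hzero | hposi
    · exact absurd (negex (-(lam k)) (Real.sin (θf k)) (Real.cos (θf k)) ρ
        (by linarith only [hneg]) hsk hck hρge2 hρlt
        (by nlinarith only [hApos]) (by nlinarith only [hBneg])) (fun h => h)
    · rw [hzero] at hl2pos; norm_num at hl2pos
    · exact ⟨hposi, hcard2⟩
  -- ordering and recursion between consecutive gates
  have hRec : ∀ k : ℕ, 1 ≤ k → k + 1 ≤ N →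
      lam k + (2*Real.sin δ - 2*(1 - Real.cos δ)) ≤ lam (k+1) := by
    intro k h1 h2
    obtain ⟨hsk, hck, hckC⟩ := htrig k h1 (by omega)
    obtain ⟨hsk', hck', hckC'⟩ := htrig (k+1) (by omega) h2
    obtain ⟨hUm, hUF, hUfirst⟩ := hGate k (by omega)
    obtain ⟨hUm', hUF', _⟩ := hGate (k+1) h2
    obtain ⟨hLpos, hL2⟩ := hLam k h1 (by omega)
    obtain ⟨hLpos', hL2'⟩ := hLam (k+1) (by omega) h2
    have hp : Real.sin (θf k)^2 + Real.cos (θf k)^2 = 1 := Real.sin_sq_add_cos_sq _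
    have hp' : Real.sin (θf (k+1))^2 + Real.cos (θf (k+1))^2 = 1 := Real.sin_sq_add_cos_sq _
    have hθsucc : θf (k+1) = θf k + δ := by rw [hθf, hθf]; push_cast; ring
    have hdiff : θf (k+1) - θf k = δ := by rw [hθsucc]; ring
    have hcos2 : Real.cos (θf k) * Real.cos (θf (k+1)) + Real.sin (θf k) * Real.sin (θf (k+1))
        = Real.cos δ := by rw [← hdiff, Real.cos_sub]; ring
    have hsin2 : Real.cos (θf k) * Real.sin (θf (k+1)) - Real.sin (θf k) * Real.cos (θf (k+1))
        = Real.sin δ := by rw [← hdiff, Real.sin_sub]; ring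
    obtain ⟨hXco, hYco⟩ := coordX (X (u (k+1))) (Y (u (k+1))) (Real.cos (θf (k+1)))
      (Real.sin (θf (k+1))) (lam (k+1)) hp' hUF' (hlamdef (k+1))
    have hlS : 2*(1 - Real.cos δ) ≤ lam (k+1) * Real.sin δ :=
      lamSineStep (lam (k+1)) (Real.sin δ) (Real.cos δ) (Real.cos (θf (k+1)))
        hLpos' hSpos hCpos hCle1 hCS hckC' hL2'
    have hord : u k ≤ u (k+1) := by
      by_contra hlt
      push_neg at hlt
      have hFneg := hUfirst (u (k+1)) hUm' hlt
      have hFval : X (u (k+1)) * Real.cos (θf k) + Y (u (k+1)) * Real.sin (θf k)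
          = 2*Real.cos δ + lam (k+1) * Real.sin δ := by
        rw [hXco, hYco]
        linear_combination 2*hcos2 + lam (k+1)*hsin2
      rw [hFval] at hFneg
      linarith only [hFneg, hlS]
    have hrec := Pc (sp k) (u k) (u (k+1)) (hsub12 (hsp k)) (hsub23 hUm) (hsub23 hUm')
      (le_trans (hsp k).2 hUm.1) hord
    rw [(hsparc k (by omega)).1, (hsparc k (by omega)).2] at hrec
    have hdist0 := distpt (X (u k)) (Y (u k)) (Real.cos (θf k)) (Real.sin (θf k)) (lam k)
        (2*Real.cos (θf k)) (2*Real.sin (θf k)) hp hUF (hlamdef k)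
    have hLHS : (X (u k) - 2*Real.cos (θf k))^2 + (Y (u k) - 2*Real.sin (θf k))^2
        = (lam k)^2 := by
      rw [hdist0]; linear_combination (-4)*hp
    have hdist1 := distpt (X (u (k+1))) (Y (u (k+1))) (Real.cos (θf (k+1)))
        (Real.sin (θf (k+1))) (lam (k+1)) (2*Real.cos (θf k)) (2*Real.sin (θf k))
        hp' hUF' (hlamdef (k+1))
    have hRHS : (X (u (k+1)) - 2*Real.cos (θf k))^2 + (Y (u (k+1)) - 2*Real.sin (θf k))^2
        = (lam (k+1))^2 - 4*(lam (k+1))*Real.sin δ + 8 - 8*Real.cos δ := by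
      rw [hdist1]
      linear_combination 4*hp - 8*hcos2 - 4*(lam (k+1))*hsin2
    rw [hLHS, hRHS] at hrec
    have hkey : (lam k)^2 ≤ (lam (k+1))^2 - 4*(lam (k+1))*Real.sin δ
        + 8*(1 - Real.cos δ) := by linarith only [hrec]
    have ha2S : 2*Real.sin δ ≤ lam (k+1) :=
      lam2SStep (lam (k+1)) (Real.sin δ) (Real.cos δ) (Real.cos (θf (k+1)))
        hLpos' hSpos hCpos hCle1 hCS hckC' hL2'
    have hb2u : 2*(1 - Real.cos δ) ≤ lam k :=
      lam2uStep (lam k) (Real.sin δ) (Real.cos δ) (Real.cos (θf k))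
        hLpos hSpos hCpos hCle1 hCS hckC hL2
    have hstep := stepLemma (lam (k+1)) (lam k) (Real.sin δ) (Real.cos δ)
      hSpos hCS hkey ha2S hb2u
    linarith only [hstep]
  -- chaining
  have hChain : ∀ k : ℕ, 1 ≤ k → k ≤ N →
      (k:ℝ) * (2*Real.sin δ - 2*(1 - Real.cos δ)) ≤ lam k := by
    intro k
    induction k with
    | zero => intro h1 _; exact absurd h1 (by omega)
    | succ n ih =>
      intro _ h2
      rcases Nat.eq_zero_or_pos n with hn0 | hnpos
      · subst hn0
        obtain ⟨hLpos, hL2⟩ := hLam 1 le_rfl h2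
        have hθ1 : θf 1 = δ := by rw [hθf]; norm_num
        rw [hθ1] at hL2
        have hbase : 2*Real.sin δ - 2*(1 - Real.cos δ) ≤ lam 1 :=
          baseStep (lam 1) (Real.sin δ) (Real.cos δ) hLpos hSpos hCpos hCle1
            (Real.sin_le_one δ) hCS hL2
        push_cast
        linarith only [hbase]
      · have hih := ih hnpos (by omega)
        have hrec := hRec n hnpos h2
        push_cast
        push_cast at hih
        linarith only [hih, hrec]
  -- final gate gives lam N ≤ ρ
  have hNN : 1 ≤ N := by omega
  obtain ⟨hUmN, hUFN, _⟩ := hGate N le_rfl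
  obtain ⟨hLposN, _⟩ := hLam N hNN le_rfl
  have hθN : θf N = π/2 := by rw [hθf]; rw [hNδ]
  have hpN : Real.sin (θf N)^2 + Real.cos (θf N)^2 = 1 := Real.sin_sq_add_cos_sq _
  have hcN : Real.cos (θf N) = 0 := by rw [hθN]; exact Real.cos_pi_div_two
  have hsN : Real.sin (θf N) = 1 := by rw [hθN]; exact Real.sin_pi_div_two
  have hdistN := distpt (X (u N)) (Y (u N)) (Real.cos (θf N)) (Real.sin (θf N)) (lam N)
      0 2 hpN hUFN (hlamdef N)
  have hdN : (X (u N) - 0)^2 + (Y (u N) - 2)^2 = (lam N)^2 := by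
    rw [hdistN, hcN, hsN]; ring
  have hfinal := Pc (t 1) (u N) (t 3) hm1 (hsub23 hUmN) hm3
    (le_trans h12 hUmN.1) hUmN.2
  simp only [hXT2, hYT2, hXT4, hYT4] at hfinal
  rw [hdN] at hfinal
  have hlamρ : lam N ≤ ρ := sq_le' (by linarith only [hρge2]) (by nlinarith only [hfinal])
  -- numeric contradiction
  have hchainN := hChain N hNN le_rfl
  have hδ1 : δ ≤ 1 := by linarith only [hδsmall]
  have hsinlb : δ - δ^3/4 < Real.sin δ := by
    have := Real.sin_gt_sub_cube hδpos
    nlinarith only [this, pow_pos hδpos 3]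
  have hcosub : 1 - Real.cos δ ≤ δ^2/2 := by
    have h := halfang δ
    have h2 : Real.sin (δ/2) ≤ δ/2 := Real.sin_le (by linarith only [hδpos])
    have h3 : 0 ≤ Real.sin (δ/2) :=
      Real.sin_nonneg_of_nonneg_of_le_pi (by linarith only [hδpos])
        (by linarith only [hδsmall, hpi314])
    nlinarith only [h, h2, h3]
  have hceil : π^2/(2*(π-ρ)) ≤ (N:ℝ) := by
    have hle1 : π^2/(2*(π - ρ)) ≤ (⌈π^2 / (2*(π - ρ))⌉₊:ℝ) := Nat.le_ceil _
    have hle2 : ((⌈π^2 / (2*(π - ρ))⌉₊:ℕ):ℝ) ≤ (N:ℝ) := by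
      exact_mod_cast Nat.cast_le.2 (by omega : ⌈π^2 / (2*(π - ρ))⌉₊ ≤ N)
    linarith only [hle1, hle2]
  have hNg := finalNumeric ρ (N:ℝ) δ (Real.sin δ) (Real.cos δ) hπρ hNR hδ hδpos hδ1
    hsinlb hcosub hceil
  linarith only [hchainN, hlamρ, hNg]

private lemma norm_sub_le_norm_sub' {p q r : EuclideanSpace ℝ (Fin 2)}
    (h : (p 0 - q 0)^2 + (p 1 - q 1)^2 ≤ (r 0 - q 0)^2 + (r 1 - q 1)^2) :
    ‖p - q‖ ≤ ‖r - q‖ := by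
  have e1 := nsq2 p q
  have e2 := nsq2 r q
  nlinarith [norm_nonneg (p - q), norm_nonneg (r - q)]

/-- Example `si^4+`. For `2√2 < ρ < π`, the four ordered points
`ξ₁ = (0,0)`, `ξ₂ = (0,2)`, `ξ₃ = (2,0)`, `ξ₄ = (ρ,2)` form a self-distancing set, but
there is no continuous self-distancing curve on `[0,1]` passing through them in this
order: the set is not SDC-extendible. -/
theorem stmt_16 (ρ : ℝ) (hρ₁ : 2 * Real.sqrt 2 < ρ) (hρ₂ : ρ < Real.pi)
    (ξ : Fin 4 → EuclideanSpace ℝ (Fin 2))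
    (hξ : ξ = ![vec2 0 0, vec2 0 2, vec2 2 0, vec2 ρ 2]) :
    (∀ i j k : Fin 4, i ≤ j → j ≤ k → ‖ξ j - ξ i‖ ≤ ‖ξ k - ξ i‖) ∧
    ¬ ∃ (γ : ℝ → EuclideanSpace ℝ (Fin 2)) (t : Fin 4 → ℝ),
        ContinuousOn γ (Set.Icc 0 1) ∧
        (∀ t₁ ∈ Set.Icc (0:ℝ) 1, ∀ t₂ ∈ Set.Icc (0:ℝ) 1, ∀ t₃ ∈ Set.Icc (0:ℝ) 1,
          t₁ ≤ t₂ → t₂ ≤ t₃ → ‖γ t₂ - γ t₁‖ ≤ ‖γ t₃ - γ t₁‖) ∧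
        (∀ m, t m ∈ Set.Icc (0:ℝ) 1) ∧ Monotone t ∧ (∀ m, γ (t m) = ξ m) := by
  subst hξ
  constructor
  · have hsq2 : Real.sqrt 2 ^ 2 = 2 := Real.sq_sqrt (by norm_num)
    have hs2n : (0:ℝ) ≤ Real.sqrt 2 := Real.sqrt_nonneg 2
    intro i j k hij hjk
    fin_cases i <;> fin_cases j <;> fin_cases k <;>
      first
        | exact absurd hij (by decide)
        | exact absurd hjk (by decide)
        | (apply norm_sub_le_norm_sub'
           first
             | (norm_num [vec2]; done)
             | (norm_num [vec2]; nlinarith [hsq2, hs2n, hρ₁]))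
  · exact no_curve ρ hρ₁ hρ₂
end

section
/- Let $\gamma : [0,1] \to \mathbb{R}^2$ be a Lipschitz self-distancing curve and let $x_1 \in \mathbb{R}^2$. Then the following are equivalent: (i) $\langle \gamma'(t), x_1 - \gamma(t) \rangle \le 0$ for almost every $t \in [0,1]$ (i.e. $x_1$ belongs to the region $\mathfrak{H}(\gamma)$ cut out by all half-planes bounded by the normal lines of $\gamma$); (ii) there exists a Lipschitz self-distancing curve $\delta : [-1,1] \to \mathbb{R}^2$ with $\delta(-1) = x_1$ and $\delta(t) = \gamma(t)$ for $t \in [0,1]$. Moreover, when (i) holds, one may take $\delta(t) = x_1 + (1+t)(\gamma(0) - x_1)$ for $t \in [-1,0]$ and $\delta(t) = \gamma(t)$ for $t \in [0,1]$, i.e. $\gamma$ preceded by the straight segment from $x_1$ to $\gamma(0)$. -/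
open MeasureTheory Set

/-- `γ` is self-distancing on `s`: distances from earlier points never decrease. -/
def SelfDistOn (γ : ℝ → EuclideanSpace ℝ (Fin 2)) (s : Set ℝ) : Prop :=
  ∀ t₁ ∈ s, ∀ t₂ ∈ s, ∀ t₃ ∈ s, t₁ ≤ t₂ → t₂ ≤ t₃ → ‖γ t₂ - γ t₁‖ ≤ ‖γ t₃ - γ t₁‖

open Filter Topology



lemma aux_ftc (f : ℝ → ℝ) (hc : Continuous f) (K a b : ℝ) (hab : a ≤ b)
    (hlip : ∀ s ∈ Icc a (b+1), ∀ t ∈ Icc a (b+1), |f s - f t| ≤ K * |s - t|)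
    (h : ∀ᵐ t ∂(volume.restrict (Ioo a b)), ∃ d, HasDerivAt f d t ∧ 0 ≤ d) :
    f a ≤ f b := by
  set c : ℕ → ℝ := fun n => ((n:ℝ)+1)⁻¹ with hc_def
  have hcpos : ∀ n, 0 < c n := fun n => by positivity
  have hcmul : ∀ n : ℕ, ((n:ℝ)+1) * c n = 1 := fun n => by
    show ((n:ℝ)+1) * ((n:ℝ)+1)⁻¹ = 1
    exact mul_inv_cancel₀ (by positivity)
  have hc1 : ∀ n, c n ≤ 1 := fun n => by
    rw [hc_def]
    rw [inv_le_one_iff₀]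
    right; linarith [Nat.cast_nonneg (α := ℝ) n]
  have hc0 : Tendsto c atTop (𝓝 0) := by
    simpa [hc_def, one_div] using (tendsto_one_div_add_atTop_nhds_zero_nat : Tendsto (fun n : ℕ => 1 / ((n : ℝ) + 1)) atTop (𝓝 0))
  set g : ℕ → ℝ → ℝ := fun n t => ((n:ℝ)+1) * (f (t + c n) - f t) with hg_def
  -- slope convergence helper
  have slope_conv : ∀ (F : ℝ → ℝ) (x d : ℝ), HasDerivAt F d x →
      Tendsto (fun n : ℕ => ((n:ℝ)+1) * (F (x + c n) - F x)) atTop (𝓝 d) := by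
    intro F x d hd
    have h1 : Tendsto (fun n => x + c n) atTop (𝓝[≠] x) := by
      apply tendsto_nhdsWithin_of_tendsto_nhds_of_eventually_within
      · simpa using tendsto_const_nhds.add hc0
      · exact Eventually.of_forall fun n => by
          simp only [mem_compl_iff, mem_singleton_iff]
          have := hcpos n; intro hx; nlinarith
    have h2 := (hasDerivAt_iff_tendsto_slope.mp hd).comp h1
    refine h2.congr fun n => ?_
    simp only [Function.comp_apply, slope_def_field]
    rw [div_eq_iff (by have := hcpos n; intro hh; nlinarith : x + c n - x ≠ 0)]
    have : x + c n - x = c n := by ring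
    rw [this, mul_right_comm, hcmul n, one_mul]
  have hK : 0 ≤ K := by
    by_contra hK
    push_neg at hK
    have h1 := hlip a ⟨le_refl a, by linarith⟩ (b+1) ⟨by linarith, le_refl _⟩
    have h2 : K * |a - (b+1)| < 0 := by
      apply mul_neg_of_neg_of_pos hK
      rw [abs_pos]; intro hh; linarith
    linarith [abs_nonneg (f a - f (b+1))]
  set F : ℝ → ℝ := fun x => ∫ t in a..x, f t with hF_def
  have hF : ∀ x, HasDerivAt F (f x) x := fun x =>
    intervalIntegral.integral_hasDerivAt_right (hc.intervalIntegrable a x)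
      (hc.stronglyMeasurableAtFilter volume (𝓝 x)) hc.continuousAt
  have hFab : ∀ u v : ℝ, (∫ t in u..v, f t) = F v - F u := by
    intro u v
    rw [hF_def]
    have := intervalIntegral.integral_interval_sub_left (μ := volume)
      (hc.intervalIntegrable a v) (hc.intervalIntegrable a u)
    exact this.symm
  have hint : ∀ n : ℕ, (∫ t in a..b, g n t) =
      ((n:ℝ)+1) * (F (b + c n) - F b) - ((n:ℝ)+1) * (F (a + c n) - F a) := by
    intro n
    have hι1 : IntervalIntegrable (fun t => f (t + c n)) volume a b :=
      (hc.comp (continuous_id.add continuous_const)).intervalIntegrable a b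
    have hι2 : IntervalIntegrable f volume a b := hc.intervalIntegrable a b
    calc (∫ t in a..b, g n t) = ((n:ℝ)+1) * ∫ t in a..b, (f (t + c n) - f t) := by
          rw [← intervalIntegral.integral_const_mul]
      _ = ((n:ℝ)+1) * ((∫ t in a..b, f (t + c n)) - ∫ t in a..b, f t) := by
          rw [intervalIntegral.integral_sub hι1 hι2]
      _ = ((n:ℝ)+1) * ((∫ t in (a + c n)..(b + c n), f t) - ∫ t in a..b, f t) := by
          rw [intervalIntegral.integral_comp_add_right]
      _ = _ := by rw [hFab (a + c n) (b + c n), hFab a b]; ring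
  have htends : Tendsto (fun n : ℕ => ∫ t in a..b, g n t) atTop (𝓝 (f b - f a)) := by
    have := (slope_conv F b (f b) (hF b)).sub (slope_conv F a (f a) (hF a))
    refine this.congr fun n => (hint n).symm
  -- dominated convergence
  have hrestr : volume.restrict (Ioc a b) = volume.restrict (Ioo a b) :=
    (Measure.restrict_congr_set Ioo_ae_eq_Ioc).symm
  have hmem : ∀ᵐ t ∂(volume.restrict (Ioo a b)), t ∈ Ioo a b :=
    ae_restrict_mem measurableSet_Ioo
  have hDCT : Tendsto (fun n : ℕ => ∫ t, g n t ∂(volume.restrict (Ioo a b))) atTop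
      (𝓝 (∫ t, deriv f t ∂(volume.restrict (Ioo a b)))) := by
    apply tendsto_integral_of_dominated_convergence (fun _ => K)
    · intro n
      exact (continuous_const.mul
        ((hc.comp (continuous_id.add continuous_const)).sub hc)).aestronglyMeasurable
    · exact integrable_const K
    · intro n
      filter_upwards [hmem] with t ht
      have h1 : t ∈ Icc a (b+1) := ⟨ht.1.le, by linarith [ht.2]⟩
      have h2 : t + c n ∈ Icc a (b+1) := ⟨by linarith [ht.1, (hcpos n).le], by
        linarith [ht.2, hc1 n]⟩
      have h3 := hlip (t + c n) h2 t h1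
      have h4 : |t + c n - t| = c n := by
        rw [show t + c n - t = c n by ring, abs_of_pos (hcpos n)]
      rw [h4] at h3
      have : ‖g n t‖ = ((n:ℝ)+1) * |f (t + c n) - f t| := by
        simp only [hg_def, Real.norm_eq_abs, abs_mul,
          abs_of_nonneg (show (0:ℝ) ≤ (n:ℝ)+1 by positivity)]
      rw [this]
      calc ((n:ℝ)+1) * |f (t + c n) - f t| ≤ ((n:ℝ)+1) * (K * c n) := by
            apply mul_le_mul_of_nonneg_left h3 (by positivity)
        _ = K := by rw [show ((n:ℝ)+1) * (K * c n) = K * (((n:ℝ)+1) * c n) by ring,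
              hcmul n, mul_one]
    · filter_upwards [h, hmem] with t ⟨d, hd, _⟩ _
      have : deriv f t = d := hd.deriv
      rw [this]
      exact slope_conv f t d hd
  have heq1 : ∀ n : ℕ, (∫ t in a..b, g n t) = ∫ t, g n t ∂(volume.restrict (Ioo a b)) := by
    intro n
    rw [intervalIntegral.integral_of_le hab]
    rw [hrestr]
  have hfinal : f b - f a = ∫ t, deriv f t ∂(volume.restrict (Ioo a b)) := by
    apply tendsto_nhds_unique _ hDCT
    refine htends.congr fun n => heq1 n
  have hnn : 0 ≤ ∫ t, deriv f t ∂(volume.restrict (Ioo a b)) := by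
    apply integral_nonneg_of_ae
    filter_upwards [h] with t ⟨d, hd, hd0⟩
    rw [hd.deriv]; exact hd0
  linarith



lemma norm_le_of_sq {V : Type*} [SeminormedAddCommGroup V] {a b : V}
    (h : ‖a‖^2 ≤ ‖b‖^2) : ‖a‖ ≤ ‖b‖ := by
  have := Real.sqrt_le_sqrt h
  rwa [Real.sqrt_sq (norm_nonneg _), Real.sqrt_sq (norm_nonneg _)] at this

lemma seg_lemma {V : Type*} [NormedAddCommGroup V] [InnerProductSpace ℝ V] (a b p q : V)
    (hp : ‖a - p‖ ≤ ‖b - p‖) (hq : ‖a - q‖ ≤ ‖b - q‖) {l : ℝ} (h0 : 0 ≤ l) (h1 : l ≤ 1) :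
    ‖a - (p + l • (q - p))‖ ≤ ‖b - (p + l • (q - p))‖ := by
  apply norm_le_of_sq
  have hp2 : ‖a - p‖^2 ≤ ‖b - p‖^2 := pow_le_pow_left₀ (norm_nonneg _) hp 2
  have hq2 : ‖a - q‖^2 ≤ ‖b - q‖^2 := pow_le_pow_left₀ (norm_nonneg _) hq 2
  rw [norm_sub_sq_real, norm_sub_sq_real] at hp2 hq2 ⊢
  simp only [inner_add_right, inner_sub_right, real_inner_smul_right] at *
  nlinarith [mul_le_mul_of_nonneg_left hp2 (sub_nonneg.2 h1),
    mul_le_mul_of_nonneg_left hq2 h0]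

lemma mono_of_ae (γ : ℝ → EuclideanSpace ℝ (Fin 2)) (L : NNReal) (hγ : LipschitzWith L γ)
    (x₁ : EuclideanSpace ℝ (Fin 2))
    (hi : ∀ᵐ t ∂(volume.restrict (Icc (0:ℝ) 1)),
      (inner ℝ (deriv γ t) (x₁ - γ t) : ℝ) ≤ 0) :
    ∀ s ∈ Icc (0:ℝ) 1, ∀ t ∈ Icc (0:ℝ) 1, s ≤ t → ‖γ s - x₁‖ ≤ ‖γ t - x₁‖ := by
  intro s hs t ht hst
  set f : ℝ → ℝ := fun u => (inner ℝ (γ u - x₁) (γ u - x₁) : ℝ) with hf_def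
  have hfn : ∀ u, f u = ‖γ u - x₁‖^2 := fun u => real_inner_self_eq_norm_sq _
  have hcf : Continuous f :=
    ((hγ.continuous.sub continuous_const).inner (hγ.continuous.sub continuous_const))
  set M : ℝ := ‖γ 0 - x₁‖ + 2*L with hM_def
  have hMb : ∀ u ∈ Icc (0:ℝ) 2, ‖γ u - x₁‖ ≤ M := by
    intro u hu
    have h1 : ‖γ u - γ 0‖ ≤ L * |u| := by
      have := hγ.dist_le_mul u 0
      rwa [dist_eq_norm, Real.dist_eq, sub_zero] at this
    have h2 : |u| ≤ 2 := by rw [abs_of_nonneg hu.1]; exact hu.2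
    calc ‖γ u - x₁‖ = ‖(γ u - γ 0) + (γ 0 - x₁)‖ := by rw [sub_add_sub_cancel]
      _ ≤ ‖γ u - γ 0‖ + ‖γ 0 - x₁‖ := norm_add_le _ _
      _ ≤ L * 2 + ‖γ 0 - x₁‖ := by
          have : (L:ℝ) * |u| ≤ L * 2 := mul_le_mul_of_nonneg_left h2 L.coe_nonneg
          linarith
      _ = M := by rw [hM_def]; ring
  have hsub : Icc s (t+1) ⊆ Icc (0:ℝ) 2 := by
    intro u hu
    exact ⟨le_trans hs.1 hu.1, by linarith [hu.2, ht.2]⟩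
  have hlip : ∀ u ∈ Icc s (t+1), ∀ v ∈ Icc s (t+1), |f u - f v| ≤ (2*M*L) * |u - v| := by
    intro u hu v hv
    have hu' := hsub hu
    have hv' := hsub hv
    set p := ‖γ u - x₁‖
    set q := ‖γ v - x₁‖
    have hpq : |p - q| ≤ (L:ℝ) * |u - v| := by
      have h1 : |p - q| ≤ ‖(γ u - x₁) - (γ v - x₁)‖ := abs_norm_sub_norm_le _ _
      have h2 : (γ u - x₁) - (γ v - x₁) = γ u - γ v := by abel
      have h3 := hγ.dist_le_mul u v
      rw [dist_eq_norm, Real.dist_eq] at h3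
      rw [h2] at h1
      linarith
    have hppq : p + q ≤ 2 * M := by
      have := hMb u hu'
      have := hMb v hv'
      linarith
    have hfe : f u - f v = (p - q) * (p + q) := by rw [hfn, hfn]; ring
    calc |f u - f v| = |p - q| * (p + q) := by
          rw [hfe, abs_mul, abs_of_nonneg (by positivity : (0:ℝ) ≤ p + q)]
      _ ≤ ((L:ℝ) * |u - v|) * (2 * M) := by
          apply mul_le_mul hpq hppq (by positivity) (by positivity)
      _ = (2*M*L) * |u - v| := by ring
  have hdiff : ∀ᵐ u ∂(volume : Measure ℝ), DifferentiableAt ℝ γ u := hγ.ae_differentiableAt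
  have hIoosub : Ioo s t ⊆ Icc (0:ℝ) 1 := fun u hu => ⟨le_trans hs.1 hu.1.le, le_trans hu.2.le ht.2⟩
  have hae : ∀ᵐ u ∂(volume.restrict (Ioo s t)), ∃ d, HasDerivAt f d u ∧ 0 ≤ d := by
    filter_upwards [ae_restrict_of_ae hdiff,
      ae_restrict_of_ae_restrict_of_subset hIoosub hi] with u hu hinn
    have hγd : HasDerivAt γ (deriv γ u) u := hu.hasDerivAt
    have hsub' : HasDerivAt (fun w => γ w - x₁) (deriv γ u) u := hγd.sub_const x₁
    have hd : HasDerivAt f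
        ((inner ℝ (γ u - x₁) (deriv γ u) : ℝ) + (inner ℝ (deriv γ u) (γ u - x₁) : ℝ)) u :=
      hsub'.inner (𝕜 := ℝ) hsub'
    refine ⟨_, hd, ?_⟩
    have h1 : (inner ℝ (deriv γ u) (x₁ - γ u) : ℝ) = -(inner ℝ (deriv γ u) (γ u - x₁) : ℝ) := by
      rw [show x₁ - γ u = -(γ u - x₁) by abel, inner_neg_right]
    have h2 : (inner ℝ (γ u - x₁) (deriv γ u) : ℝ) = (inner ℝ (deriv γ u) (γ u - x₁) : ℝ) :=
      real_inner_comm _ _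
    rw [h1] at hinn
    linarith
  have := aux_ftc f hcf (2*M*L) s t hst hlip hae
  apply norm_le_of_sq
  rw [← hfn, ← hfn]
  exact this

lemma ae_of_mono (γ : ℝ → EuclideanSpace ℝ (Fin 2)) (L : NNReal) (hγ : LipschitzWith L γ)
    (x₁ : EuclideanSpace ℝ (Fin 2))
    (hM : ∀ s ∈ Icc (0:ℝ) 1, ∀ t ∈ Icc (0:ℝ) 1, s ≤ t → ‖γ s - x₁‖ ≤ ‖γ t - x₁‖) :
    ∀ᵐ t ∂(volume.restrict (Icc (0:ℝ) 1)),
      (inner ℝ (deriv γ t) (x₁ - γ t) : ℝ) ≤ 0 := by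
  have hdiff : ∀ᵐ u ∂(volume : Measure ℝ), DifferentiableAt ℝ γ u := hγ.ae_differentiableAt
  have hIoo : ∀ᵐ u ∂(volume.restrict (Icc (0:ℝ) 1)), u ∈ Ioo (0:ℝ) 1 := by
    rw [← Measure.restrict_congr_set Ioo_ae_eq_Icc]
    exact ae_restrict_mem measurableSet_Ioo
  filter_upwards [ae_restrict_of_ae hdiff, hIoo] with u hu huIoo
  set f : ℝ → ℝ := fun w => (inner ℝ (γ w - x₁) (γ w - x₁) : ℝ) with hf_def
  have hfn : ∀ w, f w = ‖γ w - x₁‖^2 := fun w => real_inner_self_eq_norm_sq _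
  have hγd : HasDerivAt γ (deriv γ u) u := hu.hasDerivAt
  have hsub' : HasDerivAt (fun w => γ w - x₁) (deriv γ u) u := hγd.sub_const x₁
  have hd : HasDerivAt f
      ((inner ℝ (γ u - x₁) (deriv γ u) : ℝ) + (inner ℝ (deriv γ u) (γ u - x₁) : ℝ)) u :=
    hsub'.inner (𝕜 := ℝ) hsub'
  have hslope := hasDerivAt_iff_tendsto_slope.mp hd
  have hmono : (0:ℝ) ≤ (inner ℝ (γ u - x₁) (deriv γ u) : ℝ) + (inner ℝ (deriv γ u) (γ u - x₁) : ℝ) := by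
    have hten : Tendsto (slope f u) (𝓝[>] u) (𝓝 ((inner ℝ (γ u - x₁) (deriv γ u) : ℝ) +
        (inner ℝ (deriv γ u) (γ u - x₁) : ℝ))) :=
      hslope.mono_left (nhdsWithin_mono _ (fun y (hy : y ∈ Ioi u) =>
        (mem_compl_singleton_iff.mpr (ne_of_gt hy))))
    apply ge_of_tendsto hten
    filter_upwards [Ioo_mem_nhdsGT_of_mem ⟨le_refl u, huIoo.2⟩] with y hy
    have hfle : f u ≤ f y := by
      rw [hfn, hfn]
      apply pow_le_pow_left₀ (norm_nonneg _)
      exact hM u ⟨huIoo.1.le, huIoo.2.le⟩ y ⟨(huIoo.1.trans hy.1).le, hy.2.le⟩ hy.1.le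
    rw [slope_def_field]
    apply div_nonneg (by linarith) (by linarith [hy.1])
  have h2 : (inner ℝ (γ u - x₁) (deriv γ u) : ℝ) = (inner ℝ (deriv γ u) (γ u - x₁) : ℝ) :=
    real_inner_comm _ _
  have h1 : (inner ℝ (deriv γ u) (x₁ - γ u) : ℝ) = -(inner ℝ (deriv γ u) (γ u - x₁) : ℝ) := by
    rw [show x₁ - γ u = -(γ u - x₁) by abel, inner_neg_right]
  rw [h1]
  linarith

lemma key_selfdist (γ : ℝ → EuclideanSpace ℝ (Fin 2)) (x₁ : EuclideanSpace ℝ (Fin 2))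
    (hsd : SelfDistOn γ (Icc 0 1))
    (hM : ∀ s ∈ Icc (0:ℝ) 1, ∀ t ∈ Icc (0:ℝ) 1, s ≤ t → ‖γ s - x₁‖ ≤ ‖γ t - x₁‖) :
    SelfDistOn (fun t => if t ≤ 0 then x₁ + (1 + t) • (γ 0 - x₁) else γ t) (Icc (-1) 1) := by
  set v : EuclideanSpace ℝ (Fin 2) := γ 0 - x₁ with hv
  set δ : ℝ → EuclideanSpace ℝ (Fin 2) := fun t => if t ≤ 0 then x₁ + (1 + t) • v else γ t with hδ
  show SelfDistOn δ (Icc (-1) 1)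
  have e1 : ∀ t, t ≤ 0 → δ t = x₁ + (1 + t) • v := fun t ht => by simp [hδ, if_pos ht]
  have e2 : ∀ t, 0 ≤ t → δ t = γ t := by
    intro t ht
    by_cases h : t ≤ 0
    · have h0 : t = 0 := le_antisymm h ht
      subst h0
      simp only [hδ, if_pos (le_refl (0:ℝ))]
      rw [hv]
      simp
    · simp [hδ, if_neg h]
  have esub : ∀ s t : ℝ, s ≤ 0 → t ≤ 0 → δ t - δ s = (t - s) • v := by
    intro s t hs ht
    rw [e1 s hs, e1 t ht]
    rw [show (x₁ + (1 + t) • v) - (x₁ + (1 + s) • v) = (1 + t) • v - (1 + s) • v by abel,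
      ← sub_smul]
    ring_nf
  intro t₁ h₁ t₂ h₂ t₃ h₃ h12 h23
  by_cases h3 : t₃ ≤ 0
  · -- all ≤ 0
    have h2 : t₂ ≤ 0 := le_trans h23 h3
    have h1 : t₁ ≤ 0 := le_trans h12 h2
    rw [esub t₁ t₂ h1 h2, esub t₁ t₃ h1 h3, norm_smul, norm_smul]
    apply mul_le_mul_of_nonneg_right _ (norm_nonneg v)
    rw [Real.norm_eq_abs, Real.norm_eq_abs, abs_of_nonneg (by linarith), abs_of_nonneg (by linarith)]
    linarith
  · push_neg at h3
    have ht3 : t₃ ∈ Icc (0:ℝ) 1 := ⟨h3.le, h₃.2⟩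
    by_cases h2 : t₂ ≤ 0
    · -- t₁ ≤ t₂ ≤ 0 < t₃
      have h1 : t₁ ≤ 0 := le_trans h12 h2
      have hseg : ‖γ 0 - δ t₁‖ ≤ ‖γ t₃ - δ t₁‖ := by
        rw [e1 t₁ h1]
        apply seg_lemma (γ 0) (γ t₃) x₁ (γ 0)
        · exact hM 0 ⟨le_refl 0, zero_le_one⟩ t₃ ht3 h3.le
        · rw [sub_self]; simp
        · linarith [h₁.1]
        · linarith
      have hnorm : ‖δ t₂ - δ t₁‖ ≤ ‖γ 0 - δ t₁‖ := by
        have hγ0 : γ 0 - δ t₁ = (0 - t₁) • v := by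
          rw [← e2 0 (le_refl 0), esub t₁ 0 h1 (le_refl 0)]
        rw [esub t₁ t₂ h1 h2, hγ0, norm_smul, norm_smul]
        apply mul_le_mul_of_nonneg_right _ (norm_nonneg v)
        rw [Real.norm_eq_abs, Real.norm_eq_abs, abs_of_nonneg (by linarith),
          abs_of_nonneg (by linarith)]
        linarith
      rw [e2 t₃ h3.le]
      exact le_trans hnorm hseg
    · push_neg at h2
      have ht2 : t₂ ∈ Icc (0:ℝ) 1 := ⟨h2.le, h₂.2⟩
      rw [e2 t₂ h2.le, e2 t₃ h3.le]
      by_cases h1 : t₁ ≤ 0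
      · -- t₁ ≤ 0 < t₂ ≤ t₃
        rw [e1 t₁ h1]
        apply seg_lemma (γ t₂) (γ t₃) x₁ (γ 0)
        · exact hM t₂ ht2 t₃ ht3 h23
        · exact hsd 0 ⟨le_refl 0, zero_le_one⟩ t₂ ht2 t₃ ht3 h2.le h23
        · linarith [h₁.1]
        · linarith
      · push_neg at h1
        rw [e2 t₁ h1.le]
        exact hsd t₁ ⟨h1.le, h₁.2⟩ t₂ ht2 t₃ ht3 h12 h23

lemma key_lipschitz (γ : ℝ → EuclideanSpace ℝ (Fin 2)) (L : NNReal) (hγ : LipschitzWith L γ)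
    (x₁ : EuclideanSpace ℝ (Fin 2)) :
    LipschitzOnWith (L + ‖γ 0 - x₁‖₊)
      (fun t => if t ≤ 0 then x₁ + (1 + t) • (γ 0 - x₁) else γ t) (Icc (-1) 1) := by
  set v : EuclideanSpace ℝ (Fin 2) := γ 0 - x₁ with hv
  set δ : ℝ → EuclideanSpace ℝ (Fin 2) := fun t => if t ≤ 0 then x₁ + (1 + t) • v else γ t with hδ
  have e1 : ∀ t, t ≤ 0 → δ t = x₁ + (1 + t) • v := fun t ht => by simp [hδ, if_pos ht]
  have e2 : ∀ t, 0 ≤ t → δ t = γ t := by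
    intro t ht
    by_cases h : t ≤ 0
    · have h0 : t = 0 := le_antisymm h ht
      subst h0
      simp only [hδ, if_pos (le_refl (0:ℝ))]
      rw [hv]; simp
    · simp [hδ, if_neg h]
  have esub : ∀ s t : ℝ, s ≤ 0 → t ≤ 0 → δ t - δ s = (t - s) • v := by
    intro s t hs ht
    rw [e1 s hs, e1 t ht]
    rw [show (x₁ + (1 + t) • v) - (x₁ + (1 + s) • v) = (1 + t) • v - (1 + s) • v by abel,
      ← sub_smul]
    ring_nf
  rw [lipschitzOnWith_iff_dist_le_mul]
  have key : ∀ x ∈ Icc (-1:ℝ) 1, ∀ y ∈ Icc (-1:ℝ) 1, x ≤ y →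
      dist (δ x) (δ y) ≤ (L + ‖v‖₊ : NNReal) * dist x y := by
    intro x hx y hy hxy
    have hC : ((L + ‖v‖₊ : NNReal) : ℝ) = (L : ℝ) + ‖v‖ := by
      push_cast; rfl
    rw [hC, Real.dist_eq, abs_of_nonpos (by linarith), neg_sub, dist_eq_norm]
    by_cases hy0 : y ≤ 0
    · have hx0 : x ≤ 0 := le_trans hxy hy0
      rw [show δ x - δ y = -(δ y - δ x) by abel, norm_neg, esub x y hx0 hy0, norm_smul,
        Real.norm_eq_abs, abs_of_nonneg (by linarith)]
      nlinarith [norm_nonneg v, L.coe_nonneg]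
    · push_neg at hy0
      by_cases hx0 : x ≤ 0
      · have h1 : ‖δ x - γ 0‖ = (-x) * ‖v‖ := by
          rw [show δ x - γ 0 = -(γ 0 - δ x) by abel, norm_neg,
            ← e2 0 (le_refl 0), esub x 0 hx0 (le_refl 0), norm_smul, Real.norm_eq_abs,
            abs_of_nonneg (by linarith)]
          ring_nf
        have h2 : ‖γ 0 - γ y‖ ≤ (L:ℝ) * y := by
          have := hγ.dist_le_mul 0 y
          rw [dist_eq_norm, Real.dist_eq, abs_of_nonpos (by linarith), neg_sub, sub_zero] at this
          exact this
        calc ‖δ x - δ y‖ = ‖(δ x - γ 0) + (γ 0 - γ y)‖ := by rw [e2 y hy0.le, sub_add_sub_cancel]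
          _ ≤ ‖δ x - γ 0‖ + ‖γ 0 - γ y‖ := norm_add_le _ _
          _ ≤ (-x) * ‖v‖ + (L:ℝ) * y := by rw [h1]; linarith
          _ ≤ ((L:ℝ) + ‖v‖) * (y - x) := by nlinarith [norm_nonneg v, L.coe_nonneg]
      · push_neg at hx0
        rw [e2 x hx0.le, e2 y hy0.le]
        have := hγ.dist_le_mul x y
        rw [dist_eq_norm, Real.dist_eq, abs_of_nonpos (by linarith)] at this
        nlinarith [norm_nonneg (γ x - γ y), L.coe_nonneg, norm_nonneg v]
  intro x hx y hy
  rcases le_total x y with h | h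
  · exact key x hx y hy h
  · rw [dist_comm (δ x) (δ y), dist_comm x y]
    exact key y hy x hx h

/-- For a Lipschitz self-distancing curve `γ : [0,1] → ℝ²` and a point
`x₁`: `x₁` lies in all the half-planes bounded by the normal lines of `γ` (i.e.
`⟪γ'(t), x₁ - γ(t)⟫ ≤ 0` a.e.) iff `γ` can be extended backwards to a Lipschitz
self-distancing curve on `[-1,1]` starting at `x₁`; moreover in that case the extension
may be taken to be the straight segment from `x₁` to `γ(0)` followed by `γ`. -/
theorem stmt_17 (γ : ℝ → EuclideanSpace ℝ (Fin 2)) (L : NNReal) (hγ : LipschitzWith L γ)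
    (hsd : SelfDistOn γ (Icc 0 1)) (x₁ : EuclideanSpace ℝ (Fin 2)) :
    ((∀ᵐ t ∂(volume.restrict (Icc (0:ℝ) 1)),
        (inner ℝ (deriv γ t) (x₁ - γ t) : ℝ) ≤ 0) ↔
      (∃ (δ : ℝ → EuclideanSpace ℝ (Fin 2)) (L' : NNReal),
        LipschitzOnWith L' δ (Icc (-1) 1) ∧ SelfDistOn δ (Icc (-1) 1) ∧
        δ (-1) = x₁ ∧ ∀ t ∈ Icc (0:ℝ) 1, δ t = γ t)) ∧
    ((∀ᵐ t ∂(volume.restrict (Icc (0:ℝ) 1)),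
        (inner ℝ (deriv γ t) (x₁ - γ t) : ℝ) ≤ 0) →
      SelfDistOn (fun t => if t ≤ 0 then x₁ + (1 + t) • (γ 0 - x₁) else γ t)
        (Icc (-1) 1)) := by
  have hmain := mono_of_ae γ L hγ x₁
  refine ⟨⟨fun hi => ?_, ?_⟩, fun hi => key_selfdist γ x₁ hsd (hmain hi)⟩
  · refine ⟨fun t => if t ≤ 0 then x₁ + (1 + t) • (γ 0 - x₁) else γ t, L + ‖γ 0 - x₁‖₊,
      key_lipschitz γ L hγ x₁, key_selfdist γ x₁ hsd (hmain hi), ?_, ?_⟩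
    · norm_num
    · intro t ht
      by_cases h : t ≤ 0
      · have h0 : t = 0 := le_antisymm h ht.1
        subst h0
        simp
      · simp [if_neg h]
  · rintro ⟨δ, L', hlip, hsd', hm1, heq⟩
    apply ae_of_mono γ L hγ x₁
    intro s hs t ht hst
    have h := hsd' (-1) ⟨le_refl _, by norm_num⟩ s ⟨by linarith [hs.1], hs.2⟩
      t ⟨by linarith [ht.1], ht.2⟩ (by linarith [hs.1]) hst
    rwa [heq s hs, heq t ht, hm1] at h
end
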